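/- arXiv:1805.05604 — 5 statements merged into one kernel-verified Lean document; each statement's English description precedes it below -/
import Mathlib

section
/- Let A be a finite set of vectors in ℤ^n. Then the intersection of the real cone generated by A with the rational span of A equals the rational cone generated by A, i.e., ℝ_{≥0}A ∩ ℚA = ℚ_{≥0}A. -/
open Finset

/-- The cast of an integer vector to a real vector. -/
def castR {n : ℕ} (a : Fin n → ℤ) : Fin n → ℝ := fun i => (a i : ℝ)

/-- The cast of an integer vector to a rational vector. -/
def castQ {n : ℕ} (a : Fin n → ℤ) : Fin n → ℚ := fun i => (a i : ℚ)

/-- The cast of an integer vector to a complex vector. -/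
def castC {n : ℕ} (a : Fin n → ℤ) : Fin n → ℂ := fun i => (a i : ℂ)

/-- The real convex cone `ℝ_{≥0}A` generated by a finite set `A ⊂ ℤ^n`. -/
def realCone {n : ℕ} (A : Finset (Fin n → ℤ)) : Set (Fin n → ℝ) :=
  {x | ∃ c : (Fin n → ℤ) → ℝ, (∀ a, 0 ≤ c a) ∧ x = ∑ a ∈ A, c a • castR a}

/-- The rational span `ℚA`, viewed inside `ℝ^n`. -/
def ratSpan {n : ℕ} (A : Finset (Fin n → ℤ)) : Set (Fin n → ℝ) :=
  {x | ∃ c : (Fin n → ℤ) → ℚ, x = ∑ a ∈ A, (c a : ℝ) • castR a}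

/-- The rational cone `ℚ_{≥0}A`, viewed inside `ℝ^n`. -/
def ratCone {n : ℕ} (A : Finset (Fin n → ℤ)) : Set (Fin n → ℝ) :=
  {x | ∃ c : (Fin n → ℤ) → ℚ, (∀ a, 0 ≤ c a) ∧ x = ∑ a ∈ A, (c a : ℝ) • castR a}

/-- `F` is a face of `A`: `F = A ∩ ker h` for some `h : ℤA →+ ℤ` with `h(A) ⊆ ℕ`. -/
def IsFace {n : ℕ} (A F : Finset (Fin n → ℤ)) : Prop :=
  F ⊆ A ∧ ∃ h : AddSubgroup.closure (A : Set (Fin n → ℤ)) →+ ℤ,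
    ∀ (a : Fin n → ℤ) (ha : a ∈ A),
      0 ≤ h ⟨a, AddSubgroup.subset_closure (Finset.mem_coe.mpr ha)⟩ ∧
      (a ∈ F ↔ h ⟨a, AddSubgroup.subset_closure (Finset.mem_coe.mpr ha)⟩ = 0)

/-- The rank of the subgroup `ℤA`, i.e. the dimension of the `ℚ`-span of `A`. -/
noncomputable def rkQ {n : ℕ} (A : Finset (Fin n → ℤ)) : ℕ :=
  Module.finrank ℚ (Submodule.span ℚ (castQ '' (A : Set (Fin n → ℤ))))

/-- `A` is normal: `ℝ_{≥0}A ∩ ℤA = ℕA`. -/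
def IsNormal {n : ℕ} (A : Finset (Fin n → ℤ)) : Prop :=
  ∀ v : Fin n → ℤ,
    (v ∈ AddSubgroup.closure (A : Set (Fin n → ℤ)) ∧ castR v ∈ realCone A) ↔
      v ∈ AddSubmonoid.closure (A : Set (Fin n → ℤ))


lemma gram_zero {K : Type*} [Field K] [LinearOrder K] [IsStrictOrderedRing K] {ι : Type*} [Fintype ι] {m : ℕ}
    (v : ι → Fin m → K) (e : ι → K)
    (h : ∀ a, ∑ b, (∑ i, v a i * v b i) * e b = 0) : ∑ a, e a • v a = 0 := by
  have key : ∑ i, (∑ a, e a * v a i) ^ 2 = 0 := by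
    calc ∑ i, (∑ a, e a * v a i) ^ 2
        = ∑ i, ∑ a, ∑ b, e a * (v a i * v b i * e b) := by
          refine Finset.sum_congr rfl fun i _ => ?_
          rw [sq, Fintype.sum_mul_sum]
          exact Finset.sum_congr rfl fun a _ => Finset.sum_congr rfl fun b _ => by ring
      _ = ∑ a, ∑ b, ∑ i, e a * (v a i * v b i * e b) := by
          rw [Finset.sum_comm]
          exact Finset.sum_congr rfl fun a _ => Finset.sum_comm
      _ = ∑ a, ∑ b, e a * ((∑ i, v a i * v b i) * e b) := by
          refine Finset.sum_congr rfl fun a _ => Finset.sum_congr rfl fun b _ => ?_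
          rw [← Finset.mul_sum, ← Finset.sum_mul]
      _ = 0 := by
          refine Finset.sum_eq_zero fun a _ => ?_
          rw [← Finset.mul_sum, h a, mul_zero]
  have hz : ∀ i : Fin m, (∑ a, e a * v a i) = 0 := by
    intro i
    have := (Finset.sum_eq_zero_iff_of_nonneg (fun i _ => sq_nonneg _)).mp key i (Finset.mem_univ i)
    exact pow_eq_zero_iff (two_ne_zero) |>.mp this
  funext i
  simpa [Finset.sum_apply] using hz i

lemma cone_cara {n : ℕ} (A : Finset (Fin n → ℤ)) :
    ∀ c : (Fin n → ℤ) → ℝ, (∀ a, 0 ≤ c a) →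
    ∃ S : Finset (Fin n → ℤ), S ⊆ A ∧
      LinearIndependent ℝ (fun a : {x // x ∈ S} => castR a.1) ∧
      ∃ d : (Fin n → ℤ) → ℝ, (∀ a, 0 ≤ d a) ∧
        ∑ a ∈ S, d a • castR a = ∑ a ∈ A, c a • castR a := by
  induction A using Finset.strongInduction with
  | _ A ih =>
    intro c hc
    by_cases hli : LinearIndependent ℝ (fun a : {x // x ∈ A} => castR a.1)
    · exact ⟨A, subset_rfl, hli, c, hc, rfl⟩
    · obtain ⟨g0, hg0, i0, hgi0⟩ := Fintype.not_linearIndependent_iff.mp hli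
      -- get a relation with some positive coefficient
      obtain ⟨g, hg, i, hgi⟩ :
          ∃ g : {x // x ∈ A} → ℝ, ∑ a, g a • castR a.1 = 0 ∧ ∃ i, 0 < g i := by
        rcases hgi0.lt_or_gt with hlt | hlt
        · exact ⟨-g0, by simpa using hg0, i0, by simpa using hlt⟩
        · exact ⟨g0, hg0, i0, hlt⟩
      -- extend g to all vectors
      set g' : (Fin n → ℤ) → ℝ := fun v => if h : v ∈ A then g ⟨v, h⟩ else 0 with hg'def
      have hrel : ∑ a ∈ A, g' a • castR a = 0 := by
        rw [← Finset.sum_attach A (fun a => g' a • castR a)]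
        rw [← hg]
        refine Finset.sum_congr rfl fun a _ => ?_
        simp [hg'def, a.2]
      -- minimize over positive coefficients
      have hT : (A.attach.filter (fun a => 0 < g a)).Nonempty := ⟨i, by simpa using hgi⟩
      obtain ⟨a0, ha0T, ha0min⟩ :=
        Finset.exists_min_image (A.attach.filter (fun a => 0 < g a)) (fun a => c a.1 / g a) hT
      have hga0 : 0 < g a0 := (Finset.mem_filter.mp ha0T).2
      set t : ℝ := c a0.1 / g a0 with htdef
      have ht : 0 ≤ t := div_nonneg (hc a0.1) hga0.le
      set c' : (Fin n → ℤ) → ℝ := fun v => if v ∈ A then c v - t * g' v else 0 with hc'def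
      have hc' : ∀ a, 0 ≤ c' a := by
        intro a
        rw [hc'def]
        by_cases hA : a ∈ A
        · simp only [hA, if_true]
          by_cases hpos : 0 < g' a
          · have hg'a : g' a = g ⟨a, hA⟩ := by simp [hg'def, hA]
            have hmem : ⟨a, hA⟩ ∈ A.attach.filter (fun a => 0 < g a) := by
              simp [Finset.mem_filter, ← hg'a, hpos]
            have := ha0min ⟨a, hA⟩ hmem
            rw [div_le_div_iff₀ hga0 (hg'a ▸ hpos)] at this
            have : t * g' a ≤ c a := by
              rw [htdef, hg'a, div_mul_eq_mul_div, div_le_iff₀ hga0]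
              linarith [this]
            linarith
          · push_neg at hpos
            nlinarith [hc a]
        · simp [hA]
      have hca0 : c' a0.1 = 0 := by
        have hg'a0 : g' a0.1 = g a0 := by simp [hg'def]
        simp only [hc'def, a0.2, if_true, hg'a0, htdef]
        field_simp
        ring
      have hsum : ∑ a ∈ A.erase a0.1, c' a • castR a = ∑ a ∈ A, c a • castR a := by
        have h1 : ∑ a ∈ A.erase a0.1, c' a • castR a = ∑ a ∈ A, c' a • castR a := by
          rw [← Finset.add_sum_erase A _ a0.2, hca0, zero_smul, zero_add]
        rw [h1]
        have : ∀ a ∈ A, c' a • castR a = c a • castR a - t • (g' a • castR a) := by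
          intro a ha
          rw [hc'def]
          simp only [ha, if_true, sub_smul, smul_smul]
        rw [Finset.sum_congr rfl this, Finset.sum_sub_distrib, ← Finset.smul_sum, hrel,
          smul_zero, sub_zero]
      obtain ⟨S, hSA, hSli, d, hd, hdsum⟩ :=
        ih (A.erase a0.1) (Finset.erase_ssubset a0.2) c' hc'
      exact ⟨S, hSA.trans (Finset.erase_subset _ _), hSli, d, hd, by rw [hdsum, hsum]⟩

lemma rat_coeffs {n : ℕ} (S : Finset (Fin n → ℤ))
    (hli : LinearIndependent ℝ (fun a : {x // x ∈ S} => castR a.1))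
    (y : Fin n → ℚ) (d : (Fin n → ℤ) → ℝ) (hd : ∀ a, 0 ≤ d a)
    (hx : (fun i => (y i : ℝ)) = ∑ a ∈ S, d a • castR a) :
    ∃ q : (Fin n → ℤ) → ℚ, (∀ a, 0 ≤ q a) ∧
      (fun i => (y i : ℝ)) = ∑ a ∈ S, (q a : ℝ) • castR a := by
  classical
  set ι := {x // x ∈ S}
  set vQ : ι → Fin n → ℚ := fun a i => (a.1 i : ℚ) with hvQ
  set vR : ι → Fin n → ℝ := fun a i => (a.1 i : ℝ) with hvR
  set G : Matrix ι ι ℚ := Matrix.of fun a b => ∑ i, vQ a i * vQ b i with hG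
  set Gr : Matrix ι ι ℝ := Matrix.of fun a b => ∑ i, vR a i * vR b i with hGr
  have hliR : ∀ e : ι → ℝ, ∑ a, e a • vR a = 0 → ∀ a, e a = 0 := by
    intro e he
    exact Fintype.linearIndependent_iff.mp hli e he
  -- G.mulVecLin injective
  have hGinj : Function.Injective G.mulVecLin := by
    rw [← LinearMap.ker_eq_bot, LinearMap.ker_eq_bot']
    intro e he
    have he' : ∀ a, ∑ b, (∑ i, vQ a i * vQ b i) * e b = 0 := by
      intro a
      have := congrFun he a
      simpa [Matrix.mulVecLin, Matrix.mulVec, dotProduct, hG] using this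
    have h0 : ∑ a, e a • vQ a = 0 := gram_zero vQ e he'
    have h0R : ∑ a, (e a : ℝ) • vR a = 0 := by
      funext i
      have h1 := congrFun h0 i
      simp only [Finset.sum_apply, Pi.smul_apply, smul_eq_mul, Pi.zero_apply, hvQ] at h1
      have h2 : ((∑ a, e a * (a.1 i : ℚ) : ℚ) : ℝ) = 0 := by exact_mod_cast h1
      push_cast at h2
      simpa [Finset.sum_apply, hvR] using h2
    funext a
    exact_mod_cast hliR _ h0R a
  -- G.mulVecLin surjective
  have hGsurj : Function.Surjective G.mulVecLin :=
    (LinearMap.injective_iff_surjective (f := G.mulVecLin)).mp hGinj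
  set b : ι → ℚ := fun a => ∑ i, y i * vQ a i with hb
  obtain ⟨q0, hq0⟩ := hGsurj b
  -- Gr mulVec injective
  have hGrinj : ∀ e e' : ι → ℝ, Gr.mulVec e = Gr.mulVec e' → e = e' := by
    intro e e' hee
    have he' : ∀ a, ∑ b, (∑ i, vR a i * vR b i) * (e b - e' b) = 0 := by
      intro a
      have := congrFun hee a
      simp only [Matrix.mulVec, dotProduct, hGr, Matrix.of_apply] at this
      rw [Finset.sum_congr rfl (fun b _ => mul_sub (∑ i, vR a i * vR b i) (e b) (e' b)),
        Finset.sum_sub_distrib, this, sub_self]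
    have h0 : ∑ a, (e a - e' a) • vR a = 0 := gram_zero vR _ he'
    funext a
    have := hliR _ h0 a
    linarith
  -- both d (restricted) and cast of q0 solve the Gr system with rhs cast of b
  set dS : ι → ℝ := fun a => d a.1 with hdS
  set q0R : ι → ℝ := fun a => (q0 a : ℝ) with hq0R
  have hbR : ∀ a : ι, (b a : ℝ) = ∑ i, (y i : ℝ) * vR a i := by
    intro a
    rw [hb]
    push_cast
    rfl
  have hGrd : Gr.mulVec dS = fun a => (b a : ℝ) := by
    funext a
    rw [hbR a]
    simp only [Matrix.mulVec, dotProduct, hGr, Matrix.of_apply]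
    have hxi : ∀ i, (y i : ℝ) = ∑ v ∈ S, d v * (v i : ℝ) := by
      intro i
      have := congrFun hx i
      simpa [Finset.sum_apply, castR] using this
    calc ∑ c : ι, (∑ i, vR a i * vR c i) * dS c
        = ∑ c : ι, ∑ i, d c.1 * (c.1 i : ℝ) * (a.1 i : ℝ) := by
          refine Finset.sum_congr rfl fun c _ => ?_
          rw [Finset.sum_mul]
          exact Finset.sum_congr rfl fun i _ => by rw [hvR]; ring
      _ = ∑ i, ∑ c : ι, d c.1 * (c.1 i : ℝ) * (a.1 i : ℝ) := Finset.sum_comm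
      _ = ∑ i, (y i : ℝ) * vR a i := by
          refine Finset.sum_congr rfl fun i _ => ?_
          rw [hxi i, hvR, Finset.sum_mul, ← Finset.sum_attach S (fun v => d v * (v i:ℝ) * (a.1 i : ℝ))]
          rfl
  have hGrq : Gr.mulVec q0R = fun a => (b a : ℝ) := by
    funext a
    have h1 := congrFun hq0 a
    simp only [Matrix.mulVecLin_apply, Matrix.mulVec, dotProduct, hG, Matrix.of_apply] at h1
    rw [← h1]
    simp only [Matrix.mulVec, dotProduct, hGr, Matrix.of_apply]
    push_cast
    refine Finset.sum_congr rfl fun c _ => ?_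
    rw [hq0R]
    push_cast [hvQ, hvR]
    rfl
  have hdq : dS = q0R := hGrinj _ _ (by rw [hGrd, hGrq])
  -- build the global coefficient function
  refine ⟨fun v => if h : v ∈ S then q0 ⟨v, h⟩ else 0, ?_, ?_⟩
  · intro a
    by_cases h : a ∈ S
    · simp only [h, dif_pos]
      have heq : (q0 ⟨a, h⟩ : ℝ) = d a := by
        have h2 := congrFun hdq ⟨a, h⟩
        rw [hdS, hq0R] at h2
        exact h2.symm
      have h3 : (0:ℝ) ≤ (q0 ⟨a, h⟩ : ℝ) := by rw [heq]; exact hd a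
      exact_mod_cast h3
    · simp [h]
  · rw [hx]
    refine Finset.sum_congr rfl fun a ha => ?_
    congr 1
    simp only [ha, dif_pos]
    have := congrFun hdq ⟨a, ha⟩
    rw [hdS, hq0R] at this
    exact this

/-- ℝ≥0A ∩ ℚA = ℚ≥0A. -/
theorem realCone_inter_ratSpan_eq_ratCone (n : ℕ) (A : Finset (Fin n → ℤ)) :
    realCone A ∩ ratSpan A = ratCone A := by
  ext x
  constructor
  · rintro ⟨⟨c, hc, hxc⟩, ⟨e, hxe⟩⟩
    -- x has rational coordinates
    set y : Fin n → ℚ := fun i => ∑ a ∈ A, e a * (a i : ℚ) with hy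
    have hxy : x = fun i => (y i : ℝ) := by
      funext i
      rw [hy]
      push_cast
      rw [hxe]
      simp [Finset.sum_apply, castR]
    obtain ⟨S, hSA, hli, d, hd, hdsum⟩ := cone_cara A c hc
    have hxd : (fun i => (y i : ℝ)) = ∑ a ∈ S, d a • castR a := by
      rw [← hxy, hxc, hdsum]
    obtain ⟨q, hq, hqsum⟩ := rat_coeffs S hli y d hd hxd
    refine ⟨fun v => if v ∈ S then q v else 0, fun a => by by_cases h : a ∈ S <;> simp [h, hq a], ?_⟩
    have h1 : ∑ a ∈ A, ((if a ∈ S then q a else 0 : ℚ) : ℝ) • castR a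
        = ∑ a ∈ S, ((if a ∈ S then q a else 0 : ℚ) : ℝ) • castR a :=
      (Finset.sum_subset hSA (fun a _ ha => by simp [ha])).symm
    rw [hxy, hqsum, h1]
    exact Finset.sum_congr rfl fun a ha => by simp [ha]
  · rintro ⟨c, hc, hx⟩
    exact ⟨⟨fun a => (c a : ℝ), fun a => by show (0:ℝ) ≤ (c a : ℝ); exact_mod_cast hc a, hx⟩, c, hx⟩
end

section
/- Let A ⊂ ℤ^n be normal (ℝ_{≥0}A ∩ ℤA = ℕA). Let a_A = Σ_{a∈A} a. Let b ∈ ℕA and F_1 a face of A such that b + c ∉ a_A + ℕA for all c ∈ ℕF_1. Then there exists a codimension-one face F of A containing F_1 such that l_F(b − a_A) < 0. -/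
open Finset

namespace FacetAux

variable {n : ℕ}

lemma castQ_inj : Function.Injective (castQ (n := n)) := by
  intro v w h
  funext i
  have := congrFun h i
  simpa [castQ] using this

lemma castQ_add (v w : Fin n → ℤ) : castQ (v + w) = castQ v + castQ w := by
  funext i; simp [castQ]

lemma castQ_neg (v : Fin n → ℤ) : castQ (-v) = -castQ v := by
  funext i; simp [castQ]

lemma castQ_zero : castQ (0 : Fin n → ℤ) = 0 := by
  funext i; simp [castQ]

/-- The rational cone over a finite set of rational vectors. -/
def coneQ (S : Finset (Fin n → ℚ)) : Set (Fin n → ℚ) :=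
  {x | ∃ c : (Fin n → ℚ) → ℚ, (∀ a, 0 ≤ c a) ∧ x = ∑ a ∈ S, c a • a}

lemma coneQ_zero (S : Finset (Fin n → ℚ)) : (0 : Fin n → ℚ) ∈ coneQ S :=
  ⟨fun _ => 0, fun _ => le_refl 0, by simp⟩

lemma coneQ_mem {S : Finset (Fin n → ℚ)} {a : Fin n → ℚ} (ha : a ∈ S) : a ∈ coneQ S := by
  refine ⟨fun v => if v = a then 1 else 0, fun v => by simp only []; split <;> norm_num, ?_⟩
  have : ∀ v ∈ S, (if v = a then (1:ℚ) else 0) • v = if v = a then v else 0 := by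
    intro v _; split <;> simp
  rw [Finset.sum_congr rfl this, Finset.sum_ite_eq' S a (fun v => v), if_pos ha]

lemma coneQ_add {S : Finset (Fin n → ℚ)} {x y : Fin n → ℚ}
    (hx : x ∈ coneQ S) (hy : y ∈ coneQ S) : x + y ∈ coneQ S := by
  obtain ⟨c, hc, rfl⟩ := hx
  obtain ⟨d, hd, rfl⟩ := hy
  refine ⟨c + d, fun a => add_nonneg (hc a) (hd a), ?_⟩
  rw [← Finset.sum_add_distrib]
  exact Finset.sum_congr rfl (fun a _ => by simp [add_smul])

lemma coneQ_smul {S : Finset (Fin n → ℚ)} {x : Fin n → ℚ} {q : ℚ}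
    (hq : 0 ≤ q) (hx : x ∈ coneQ S) : q • x ∈ coneQ S := by
  obtain ⟨c, hc, rfl⟩ := hx
  refine ⟨fun a => q * c a, fun a => mul_nonneg hq (hc a), ?_⟩
  rw [Finset.smul_sum]
  exact Finset.sum_congr rfl (fun a _ => by rw [smul_smul])

lemma coneQ_sum {S : Finset (Fin n → ℚ)} {ι : Type*} (s : Finset ι) (g : ι → Fin n → ℚ)
    (hg : ∀ i ∈ s, g i ∈ coneQ S) : ∑ i ∈ s, g i ∈ coneQ S := by
  classical
  induction s using Finset.induction_on with
  | empty => simpa using coneQ_zero S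
  | insert _ _ hnotmem ih =>
    rename_i a s
    rw [Finset.sum_insert hnotmem]
    exact coneQ_add (hg a (Finset.mem_insert_self a s))
      (ih fun i hi => hg i (Finset.mem_insert_of_mem hi))

lemma coneQ_mono {S T : Finset (Fin n → ℚ)} (hST : S ⊆ T) : coneQ S ⊆ coneQ T := by
  rintro x ⟨c, hc, rfl⟩
  refine ⟨fun a => if a ∈ S then c a else 0, fun a => by simp only []; split; exacts [hc a, le_refl 0], ?_⟩
  rw [← Finset.sum_subset hST]
  · exact Finset.sum_congr rfl fun a ha => by simp only [if_pos ha]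
  · intro a _ ha; simp only [if_neg ha, zero_smul]


lemma farkas_aux : ∀ (k : ℕ) (S : Finset (Fin n → ℚ)) (x : Fin n → ℚ),
    S.card ≤ k → x ∉ coneQ S →
    ∃ f : (Fin n → ℚ) →ₗ[ℚ] ℚ, (∀ a ∈ S, 0 ≤ f a) ∧ f x < 0 := by
  intro k
  induction k with
  | zero =>
    intro S x hcard hx
    have hS : S = ∅ := Finset.card_eq_zero.mp (Nat.le_zero.mp hcard)
    subst hS
    have hx0 : x ≠ 0 := fun h => hx (h ▸ coneQ_zero ∅)
    obtain ⟨f, hfx, -⟩ := Submodule.exists_dual_map_eq_bot_of_notMem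
      (p := (⊥ : Submodule ℚ (Fin n → ℚ))) (by simpa using hx0) inferInstance
    rcases lt_or_gt_of_ne hfx with h | h
    · exact ⟨f, fun a ha => absurd ha (Finset.notMem_empty a), h⟩
    · exact ⟨-f, fun a ha => absurd ha (Finset.notMem_empty a), by simpa using h⟩
  | succ k ih =>
    intro S x hcard hx
    rcases S.eq_empty_or_nonempty with rfl | ⟨a₀, ha₀⟩
    · exact ih ∅ x (by simp) hx
    set B := S.erase a₀ with hB
    have hBcard : B.card ≤ k := by
      have h1 := Finset.card_erase_of_mem ha₀
      have h2 : 1 ≤ S.card := Finset.card_pos.mpr ⟨a₀, ha₀⟩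
      rw [← hB] at h1
      omega
    have hxB : x ∉ coneQ B := fun h => hx (coneQ_mono (Finset.erase_subset a₀ S) h)
    obtain ⟨f, hf, hfx⟩ := ih B x hBcard hxB
    by_cases h0 : 0 ≤ f a₀
    · refine ⟨f, fun a ha => ?_, hfx⟩
      rcases eq_or_ne a a₀ with rfl | hne
      · exact h0
      · exact hf a (Finset.mem_erase.mpr ⟨hne, ha⟩)
    push_neg at h0
    set B' := B.image (fun b => b - (f b / f a₀) • a₀) with hB'
    have hB'card : B'.card ≤ k := le_trans Finset.card_image_le hBcard
    set x' := x - (f x / f a₀) • a₀ with hx'def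
    have hmemS : ∀ v ∈ B', v ∈ coneQ S := by
      intro v hv
      obtain ⟨b, hb, rfl⟩ := Finset.mem_image.mp hv
      have hcoef : 0 ≤ -(f b / f a₀) := by
        have h1 : 0 ≤ f b := hf b hb
        have : f b / f a₀ ≤ 0 := div_nonpos_of_nonneg_of_nonpos h1 (le_of_lt h0)
        linarith
      have : b - (f b / f a₀) • a₀ = b + (-(f b / f a₀)) • a₀ := by
        rw [neg_smul, ← sub_eq_add_neg]
      rw [this]
      exact coneQ_add (coneQ_mem (Finset.mem_of_mem_erase hb))
        (coneQ_smul hcoef (coneQ_mem ha₀))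
    have hx'B' : x' ∉ coneQ B' := by
      intro hmem
      apply hx
      have h1 : x' ∈ coneQ S := by
        obtain ⟨c, hc, hsum⟩ := hmem
        rw [hsum]
        exact coneQ_sum B' _ (fun v hv => coneQ_smul (hc v) (hmemS v hv))
      have ht : 0 ≤ f x / f a₀ := le_of_lt (div_pos_of_neg_of_neg hfx h0)
      have h2 : x = x' + (f x / f a₀) • a₀ := by
        rw [hx'def, sub_add_cancel]
      rw [h2]
      exact coneQ_add h1 (coneQ_smul ht (coneQ_mem ha₀))
    obtain ⟨g, hg, hgx'⟩ := ih B' x' hB'card hx'B'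
    have ha₀ne : f a₀ ≠ 0 := ne_of_lt h0
    refine ⟨g - (g a₀ / f a₀) • f, fun a ha => ?_, ?_⟩
    · rcases eq_or_ne a a₀ with rfl | hne
      · simp only [LinearMap.sub_apply, LinearMap.smul_apply, smul_eq_mul]
        rw [div_mul_cancel₀ _ ha₀ne]
        simp
      · have haB : a ∈ B := Finset.mem_erase.mpr ⟨hne, ha⟩
        have := hg _ (Finset.mem_image_of_mem (fun b => b - (f b / f a₀) • a₀) haB)
        simp only [map_sub, map_smul, smul_eq_mul] at this
        simp only [LinearMap.sub_apply, LinearMap.smul_apply, smul_eq_mul]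
        have heq : g a - g a₀ / f a₀ * f a = g a - f a / f a₀ * g a₀ := by
          field_simp
        rw [heq]; exact this
    · have := hgx'
      rw [hx'def] at this
      simp only [map_sub, map_smul, smul_eq_mul] at this
      simp only [LinearMap.sub_apply, LinearMap.smul_apply, smul_eq_mul]
      have heq : g x - g a₀ / f a₀ * f x = g x - f x / f a₀ * g a₀ := by
        field_simp
      rw [heq]; exact this


lemma perturb (S : Finset (Fin n → ℚ)) (x : Fin n → ℚ) (f g : (Fin n → ℚ) →ₗ[ℚ] ℚ)
    (hf : ∀ a ∈ S, 0 ≤ f a) (hgF : ∀ a ∈ S, f a = 0 → g a = 0) (hgx : g x = 0)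
    (hT : ∃ a ∈ S, g a < 0) :
    ∃ f' : (Fin n → ℚ) →ₗ[ℚ] ℚ, (∀ a ∈ S, 0 ≤ f' a) ∧ f' x = f x ∧
      Module.finrank ℚ (Submodule.span ℚ ((S.filter fun a => f a = 0) : Set (Fin n → ℚ))) <
      Module.finrank ℚ (Submodule.span ℚ ((S.filter fun a => f' a = 0) : Set (Fin n → ℚ))) := by
  classical
  set T := S.filter (fun a => g a < 0) with hTdef
  have hTne : T.Nonempty := by
    obtain ⟨a, haS, hga⟩ := hT
    exact ⟨a, Finset.mem_filter.mpr ⟨haS, hga⟩⟩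
  set imgs := T.image (fun a => f a / (-(g a))) with himgs
  have himgsne : imgs.Nonempty := hTne.image _
  set t := imgs.min' himgsne with ht
  obtain ⟨astar, hastarT, hastar⟩ := Finset.mem_image.mp (imgs.min'_mem himgsne)
  rw [← ht] at hastar
  have hastarS : astar ∈ S := (Finset.mem_filter.mp hastarT).1
  have hgastar : g astar < 0 := (Finset.mem_filter.mp hastarT).2
  have hfastar : 0 < f astar := by
    rcases lt_or_eq_of_le (hf astar hastarS) with h | h
    · exact h
    · exact absurd (hgF astar hastarS h.symm) (ne_of_lt hgastar)
  have htpos : 0 < t := by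
    rw [← hastar]
    exact div_pos hfastar (neg_pos.mpr hgastar)
  have htmin : ∀ a ∈ T, t ≤ f a / (-(g a)) := fun a ha =>
    imgs.min'_le _ (Finset.mem_image_of_mem _ ha)
  refine ⟨f + t • g, ?_, ?_, ?_⟩
  · intro a haS
    simp only [LinearMap.add_apply, LinearMap.smul_apply, smul_eq_mul]
    by_cases hga : g a < 0
    · have haT : a ∈ T := Finset.mem_filter.mpr ⟨haS, hga⟩
      have h1 : t * (-(g a)) ≤ f a / (-(g a)) * (-(g a)) :=
        mul_le_mul_of_nonneg_right (htmin a haT) (le_of_lt (neg_pos.mpr hga))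
      rw [div_mul_cancel₀ _ (by linarith : -(g a) ≠ 0)] at h1
      linarith
    · push_neg at hga
      have := hf a haS
      nlinarith
  · simp only [LinearMap.add_apply, LinearMap.smul_apply, smul_eq_mul, hgx, mul_zero, add_zero]
  · have hsub : (S.filter fun a => f a = 0) ⊆ (S.filter fun a => (f + t • g) a = 0) := by
      intro a ha
      obtain ⟨haS, hfa⟩ := Finset.mem_filter.mp ha
      refine Finset.mem_filter.mpr ⟨haS, ?_⟩
      simp only [LinearMap.add_apply, LinearMap.smul_apply, smul_eq_mul, hfa, hgF a haS hfa,
        mul_zero, add_zero]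
    have hastar' : astar ∈ (S.filter fun a => (f + t • g) a = 0) := by
      refine Finset.mem_filter.mpr ⟨hastarS, ?_⟩
      simp only [LinearMap.add_apply, LinearMap.smul_apply, smul_eq_mul]
      have hgne : g astar ≠ 0 := ne_of_lt hgastar
      have hmul : t * g astar = -f astar := by
        rw [← hastar, div_mul_eq_mul_div, div_neg, mul_div_assoc, div_self hgne, mul_one]
      rw [hmul]; ring
    have hWker : Submodule.span ℚ ((S.filter fun a => f a = 0) : Set (Fin n → ℚ)) ≤
        LinearMap.ker g := by
      rw [Submodule.span_le]
      intro a ha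
      obtain ⟨haS, hfa⟩ := Finset.mem_filter.mp (Finset.mem_coe.mp ha)
      exact LinearMap.mem_ker.mpr (hgF a haS hfa)
    have hanotW : astar ∉ Submodule.span ℚ ((S.filter fun a => f a = 0) : Set (Fin n → ℚ)) := by
      intro hmem
      exact absurd (LinearMap.mem_ker.mp (hWker hmem)) (ne_of_lt hgastar)
    have hlt : Submodule.span ℚ ((S.filter fun a => f a = 0) : Set (Fin n → ℚ)) <
        Submodule.span ℚ ((S.filter fun a => (f + t • g) a = 0) : Set (Fin n → ℚ)) := by
      refine lt_of_le_of_ne (Submodule.span_mono (Finset.coe_subset.mpr hsub)) ?_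
      intro h
      exact hanotW (h ▸ Submodule.subset_span (Finset.mem_coe.mpr hastar'))
    exact Submodule.finrank_lt_finrank_of_lt hlt

lemma farkasFacet (S : Finset (Fin n → ℚ)) (x : Fin n → ℚ)
    (hx : x ∈ Submodule.span ℚ (S : Set (Fin n → ℚ))) (hxc : x ∉ coneQ S) :
    ∃ f : (Fin n → ℚ) →ₗ[ℚ] ℚ, (∀ a ∈ S, 0 ≤ f a) ∧ f x < 0 ∧
      Module.finrank ℚ (Submodule.span ℚ ((S.filter fun a => f a = 0) : Set (Fin n → ℚ))) + 1 =
      Module.finrank ℚ (Submodule.span ℚ (S : Set (Fin n → ℚ))) := by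
  classical
  set d := Module.finrank ℚ (Submodule.span ℚ (S : Set (Fin n → ℚ))) with hd
  have hrlt : ∀ f : (Fin n → ℚ) →ₗ[ℚ] ℚ, f x < 0 →
      Module.finrank ℚ (Submodule.span ℚ ((S.filter fun a => f a = 0) : Set (Fin n → ℚ))) < d := by
    intro f hfx
    have hle : Submodule.span ℚ ((S.filter fun a => f a = 0) : Set (Fin n → ℚ)) ≤
        Submodule.span ℚ (S : Set (Fin n → ℚ)) :=
      Submodule.span_mono (Finset.coe_subset.mpr (Finset.filter_subset _ _))
    have hker : Submodule.span ℚ ((S.filter fun a => f a = 0) : Set (Fin n → ℚ)) ≤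
        LinearMap.ker f := by
      rw [Submodule.span_le]
      intro a ha
      exact LinearMap.mem_ker.mpr (Finset.mem_filter.mp (Finset.mem_coe.mp ha)).2
    refine Submodule.finrank_lt_finrank_of_lt (lt_of_le_of_ne hle ?_)
    intro h
    have : x ∈ LinearMap.ker f := hker (h ▸ hx)
    rw [LinearMap.mem_ker] at this
    linarith
  have key : ∀ (m : ℕ) (f : (Fin n → ℚ) →ₗ[ℚ] ℚ), (∀ a ∈ S, 0 ≤ f a) → f x < 0 →
      d - 1 - Module.finrank ℚ
        (Submodule.span ℚ ((S.filter fun a => f a = 0) : Set (Fin n → ℚ))) ≤ m →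
      ∃ f' : (Fin n → ℚ) →ₗ[ℚ] ℚ, (∀ a ∈ S, 0 ≤ f' a) ∧ f' x < 0 ∧
        Module.finrank ℚ (Submodule.span ℚ ((S.filter fun a => f' a = 0) : Set (Fin n → ℚ))) + 1
          = d := by
    intro m
    induction m with
    | zero =>
      intro f hf hfx hm
      refine ⟨f, hf, hfx, ?_⟩
      have := hrlt f hfx
      omega
    | succ m ih =>
      intro f hf hfx hm
      set r := Module.finrank ℚ
        (Submodule.span ℚ ((S.filter fun a => f a = 0) : Set (Fin n → ℚ))) with hr
      by_cases hdone : r + 1 = d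
      · exact ⟨f, hf, hfx, hdone⟩
      have hrd : r < d := hrlt f hfx
      have hxne : x ≠ 0 := by
        intro h
        rw [h, map_zero] at hfx
        exact absurd hfx (lt_irrefl 0)
      set W := Submodule.span ℚ ((S.filter fun a => f a = 0) : Set (Fin n → ℚ)) with hW
      set U := W ⊔ (ℚ ∙ x) with hU
      have hUrank : Module.finrank ℚ U < d := by
        have h1 : Module.finrank ℚ U + Module.finrank ℚ ↥(W ⊓ (ℚ ∙ x)) =
            Module.finrank ℚ W + Module.finrank ℚ (ℚ ∙ x) :=
          Submodule.finrank_sup_add_finrank_inf_eq W (ℚ ∙ x)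
        have h2 : Module.finrank ℚ (ℚ ∙ x) = 1 := finrank_span_singleton hxne
        have hWr : Module.finrank ℚ W = r := rfl
        omega
      have hUle : U ≤ Submodule.span ℚ (S : Set (Fin n → ℚ)) := by
        refine sup_le (Submodule.span_mono (Finset.coe_subset.mpr (Finset.filter_subset _ _))) ?_
        rw [Submodule.span_singleton_le_iff_mem]
        exact hx
      have hUlt : U < Submodule.span ℚ (S : Set (Fin n → ℚ)) := by
        refine lt_of_le_of_ne hUle ?_
        intro h
        rw [h] at hUrank
        exact absurd rfl (ne_of_lt hUrank)
      obtain ⟨v, hvS, hvU⟩ := SetLike.exists_of_lt hUlt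
      obtain ⟨g, hgv, hgU⟩ := Submodule.exists_dual_map_eq_bot_of_notMem hvU inferInstance
      have hgU' : ∀ u ∈ U, g u = 0 := by
        intro u hu
        have h1 : g u ∈ Submodule.map g U := Submodule.mem_map_of_mem hu
        rw [hgU] at h1
        exact Submodule.mem_bot ℚ |>.mp h1
      have hgW : ∀ a ∈ S, f a = 0 → g a = 0 := by
        intro a haS hfa
        exact hgU' a (le_sup_left (α := Submodule ℚ (Fin n → ℚ))
          (Submodule.subset_span (Finset.mem_coe.mpr (Finset.mem_filter.mpr ⟨haS, hfa⟩))))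
      have hgx : g x = 0 :=
        hgU' x (le_sup_right (α := Submodule ℚ (Fin n → ℚ)) (Submodule.mem_span_singleton_self x))
      have hSa : ∃ a ∈ S, g a ≠ 0 := by
        by_contra h
        push_neg at h
        have : Submodule.span ℚ (S : Set (Fin n → ℚ)) ≤ LinearMap.ker g := by
          rw [Submodule.span_le]
          intro a ha
          exact LinearMap.mem_ker.mpr (h a (Finset.mem_coe.mp ha))
        exact hgv (LinearMap.mem_ker.mp (this hvS))
      obtain ⟨a₁, ha₁S, hga₁⟩ := hSa
      have hstep : ∃ f' : (Fin n → ℚ) →ₗ[ℚ] ℚ, (∀ a ∈ S, 0 ≤ f' a) ∧ f' x = f x ∧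
          r < Module.finrank ℚ
            (Submodule.span ℚ ((S.filter fun a => f' a = 0) : Set (Fin n → ℚ))) := by
        rcases lt_or_gt_of_ne hga₁ with h | h
        · exact perturb S x f g hf hgW hgx ⟨a₁, ha₁S, h⟩
        · refine perturb S x f (-g) hf (fun a haS hfa => by simp [hgW a haS hfa]) (by simp [hgx])
            ⟨a₁, ha₁S, by simpa using h⟩
      obtain ⟨f', hf', hf'x, hf'r⟩ := hstep
      have hf'xneg : f' x < 0 := hf'x ▸ hfx
      have hr' := hrlt f' hf'xneg
      exact ih f' hf' hf'xneg (by omega)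
  obtain ⟨f₀, hf₀, hf₀x⟩ := farkas_aux S.card S x le_rfl hxc
  exact key d f₀ hf₀ hf₀x (le_trans (Nat.sub_le _ _) (Nat.sub_le _ _))


lemma mem_groupClosure_of_monoid {A : Finset (Fin n → ℤ)} {v : Fin n → ℤ}
    (hv : v ∈ AddSubmonoid.closure (A : Set (Fin n → ℤ))) :
    v ∈ AddSubgroup.closure (A : Set (Fin n → ℤ)) :=
  AddSubmonoid.closure_induction (fun x hx => AddSubgroup.subset_closure hx)
    (zero_mem _) (fun _ _ _ _ hx hy => add_mem hx hy) hv

lemma castQ_mem_span {A : Finset (Fin n → ℤ)} {v : Fin n → ℤ}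
    (hv : v ∈ AddSubgroup.closure (A : Set (Fin n → ℤ))) :
    castQ v ∈ Submodule.span ℚ ((A.image castQ : Finset (Fin n → ℚ)) : Set (Fin n → ℚ)) := by
  refine AddSubgroup.closure_induction (p := fun y _ => castQ y ∈
    Submodule.span ℚ ((A.image castQ : Finset (Fin n → ℚ)) : Set (Fin n → ℚ))) ?_ ?_ ?_ ?_ hv
  · intro a ha
    exact Submodule.subset_span
      (Finset.mem_coe.mpr (Finset.mem_image_of_mem castQ (Finset.mem_coe.mp ha)))
  · show castQ (0 : Fin n → ℤ) ∈ _
    rw [castQ_zero]; exact zero_mem _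
  · intro y z _ _ hy hz
    show castQ (y + z) ∈ _
    rw [castQ_add]; exact add_mem hy hz
  · intro y _ hy
    show castQ (-y) ∈ _
    rw [castQ_neg]; exact neg_mem hy

lemma coneQ_to_realCone {A : Finset (Fin n → ℤ)} {v : Fin n → ℤ}
    (h : castQ v ∈ coneQ (A.image castQ)) : castR v ∈ realCone A := by
  obtain ⟨c, hc, hsum⟩ := h
  rw [Finset.sum_image (fun x _ y _ hxy => castQ_inj hxy)] at hsum
  refine ⟨fun a => ((c (castQ a) : ℚ) : ℝ), fun a => by simp only []; exact_mod_cast hc (castQ a), ?_⟩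
  funext i
  have hi := congrFun hsum i
  simp only [Finset.sum_apply, Pi.smul_apply, smul_eq_mul] at hi
  have h2 : ((castQ v i : ℚ) : ℝ) = ((∑ a ∈ A, c (castQ a) * castQ a i : ℚ) : ℝ) := by
    exact_mod_cast congrArg (fun q : ℚ => (q : ℝ)) hi
  push_cast at h2
  simp only [castQ] at h2
  simp only [castR, Finset.sum_apply, Pi.smul_apply, smul_eq_mul]
  convert h2 using 2 <;> simp

/-- The `ℚ`-linear cast map from `ℚ^n` to `ℝ^n`. -/
noncomputable def QtoR (n : ℕ) : (Fin n → ℚ) →ₗ[ℚ] (Fin n → ℝ) where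
  toFun := fun y i => (y i : ℝ)
  map_add' := by intro y z; funext i; simp [Pi.add_apply]
  map_smul' := by
    intro q y; funext i
    simp only [Pi.smul_apply, smul_eq_mul, RingHom.id_apply, Rat.smul_def]
    push_cast; ring

lemma QtoR_castQ (v : Fin n → ℤ) : QtoR n (castQ v) = castR v := by
  funext i; simp [QtoR, castQ, castR]

end FacetAux


open FacetAux in
/-- A normal, a_A = Σ_{a ∈ A} a, b ∈ ℕA, F₁ a face of A with
b + c ∉ a_A + ℕA for all c ∈ ℕF₁.  Then there is a codimension-one face F of A
containing F₁ with l_F(b − a_A) < 0. -/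
theorem exists_codimOne_face_neg (n : ℕ) (A : Finset (Fin n → ℤ))
    (hA : IsNormal A) (aA : Fin n → ℤ) (haA : aA = ∑ a ∈ A, a)
    (b : Fin n → ℤ) (hb : b ∈ AddSubmonoid.closure (A : Set (Fin n → ℤ)))
    (F₁ : Finset (Fin n → ℤ)) (hF₁ : IsFace A F₁)
    (hbc : ∀ c ∈ AddSubmonoid.closure (F₁ : Set (Fin n → ℤ)),
      ∀ d ∈ AddSubmonoid.closure (A : Set (Fin n → ℤ)), b + c ≠ aA + d)
    (l : Finset (Fin n → ℤ) → ((Fin n → ℝ) →ₗ[ℝ] ℝ))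
    (hl : ∀ F, IsFace A F → rkQ F + 1 = rkQ A →
      (∀ a ∈ F, l F (castR a) = 0) ∧
      (∀ a ∈ A, ∃ m : ℕ, l F (castR a) = m) ∧
      (∀ v ∈ AddSubgroup.closure (A : Set (Fin n → ℤ)), ∃ m : ℤ, l F (castR v) = m) ∧
      (∃ v ∈ AddSubgroup.closure (A : Set (Fin n → ℤ)), l F (castR v) = 1)) :
    ∃ F, IsFace A F ∧ rkQ F + 1 = rkQ A ∧ F₁ ⊆ F ∧ l F (castR (b - aA)) < 0 := by
  classical
  obtain ⟨hF₁A, -⟩ := hF₁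
  set c : Fin n → ℤ := ∑ a ∈ F₁, a with hc
  set k₀ : ℕ := (A.powerset.sup fun G => ⌈-(l G (castR (b - aA)))⌉₊) + 1 with hk₀
  set x : Fin n → ℤ := b - aA + (k₀ : ℤ) • c with hx
  have hbZ : b ∈ AddSubgroup.closure (A : Set (Fin n → ℤ)) := mem_groupClosure_of_monoid hb
  have haAZ : aA ∈ AddSubgroup.closure (A : Set (Fin n → ℤ)) := by
    rw [haA]
    exact AddSubgroup.sum_mem _ fun a ha => AddSubgroup.subset_closure (Finset.mem_coe.mpr ha)
  have hcN : c ∈ AddSubmonoid.closure (F₁ : Set (Fin n → ℤ)) := by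
    rw [hc]
    exact AddSubmonoid.sum_mem _ fun a ha => AddSubmonoid.subset_closure (Finset.mem_coe.mpr ha)
  have hcZ : c ∈ AddSubgroup.closure (A : Set (Fin n → ℤ)) := by
    rw [hc]
    exact AddSubgroup.sum_mem _ fun a ha =>
      AddSubgroup.subset_closure (Finset.mem_coe.mpr (hF₁A ha))
  have hxZ : x ∈ AddSubgroup.closure (A : Set (Fin n → ℤ)) := by
    rw [hx]
    exact add_mem (sub_mem hbZ haAZ) (zsmul_mem hcZ _)
  have hxQC : castQ x ∉ coneQ (A.image castQ) := by
    intro hmem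
    have hxN : x ∈ AddSubmonoid.closure (A : Set (Fin n → ℤ)) :=
      (hA x).mp ⟨hxZ, coneQ_to_realCone hmem⟩
    have hkc : (k₀ : ℤ) • c ∈ AddSubmonoid.closure (F₁ : Set (Fin n → ℤ)) := by
      rw [natCast_zsmul]
      exact nsmul_mem hcN k₀
    exact hbc _ hkc x hxN (by rw [hx]; ring)
  obtain ⟨f, hf0, hfx, hrank⟩ := farkasFacet (A.image castQ) (castQ x) (castQ_mem_span hxZ) hxQC
  set F : Finset (Fin n → ℤ) := A.filter (fun a => f (castQ a) = 0) with hF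
  have hFA : F ⊆ A := Finset.filter_subset _ _
  have hFimg : (A.image castQ).filter (fun y => f y = 0) = F.image castQ :=
    Finset.filter_image
  -- rank condition
  have hrkF : rkQ F + 1 = rkQ A := by
    rw [rkQ, rkQ, ← Finset.coe_image, ← Finset.coe_image, ← hFimg]
    exact hrank
  -- integrality of a scaled version of f on ℤA
  set N : ℕ := ∏ a ∈ A, (f (castQ a)).den with hN
  have hNpos : 0 < N := Finset.prod_pos fun a _ => (f (castQ a)).pos
  have hint : ∀ a ∈ A, ∃ m : ℤ, (N : ℚ) * f (castQ a) = (m : ℚ) := by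
    intro a ha
    refine ⟨(∏ b ∈ A.erase a, ((f (castQ b)).den : ℤ)) * (f (castQ a)).num, ?_⟩
    rw [hN, ← Finset.prod_erase_mul _ _ ha]
    push_cast
    rw [mul_assoc]
    congr 1
    rw [mul_comm]
    exact Rat.mul_den_eq_num _
  have hintZ : ∀ v ∈ AddSubgroup.closure (A : Set (Fin n → ℤ)),
      ∃ m : ℤ, (N : ℚ) * f (castQ v) = (m : ℚ) := by
    intro v hv
    refine AddSubgroup.closure_induction
      (p := fun y _ => ∃ m : ℤ, (N : ℚ) * f (castQ y) = (m : ℚ)) ?_ ?_ ?_ ?_ hv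
    · intro a ha; exact hint a (Finset.mem_coe.mp ha)
    · exact ⟨0, by show (N : ℚ) * f (castQ (0 : Fin n → ℤ)) = _; rw [castQ_zero]; simp⟩
    · rintro y z _ _ ⟨m₁, h₁⟩ ⟨m₂, h₂⟩
      refine ⟨m₁ + m₂, ?_⟩
      show (N : ℚ) * f (castQ (y + z)) = _
      rw [castQ_add, map_add, mul_add, h₁, h₂]; push_cast; ring
    · rintro y _ ⟨m, h⟩
      refine ⟨-m, ?_⟩
      show (N : ℚ) * f (castQ (-y)) = _
      rw [castQ_neg, map_neg, mul_neg, h]; push_cast; ring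
  have hface : IsFace A F := by
    refine ⟨hFA, ⟨AddMonoidHom.mk' (fun v => ((N : ℚ) * f (castQ v.1)).num) ?_, ?_⟩⟩
    · rintro ⟨v, hv⟩ ⟨w, hw⟩
      obtain ⟨m₁, h₁⟩ := hintZ v hv
      obtain ⟨m₂, h₂⟩ := hintZ w hw
      have hvw : (N : ℚ) * f (castQ (v + w)) = ((m₁ + m₂ : ℤ) : ℚ) := by
        rw [castQ_add, map_add, mul_add, h₁, h₂]; push_cast; ring
      show ((N : ℚ) * f (castQ (v + w))).num = ((N : ℚ) * f (castQ v)).num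
        + ((N : ℚ) * f (castQ w)).num
      rw [hvw, h₁, h₂, Rat.num_intCast, Rat.num_intCast, Rat.num_intCast]
    · intro a ha
      constructor
      · show 0 ≤ ((N : ℚ) * f (castQ a)).num
        rw [Rat.num_nonneg]
        exact mul_nonneg (by positivity)
          (hf0 (castQ a) (Finset.mem_image_of_mem castQ ha))
      · show a ∈ F ↔ ((N : ℚ) * f (castQ a)).num = 0
        rw [Rat.num_eq_zero, mul_eq_zero]
        constructor
        · intro haF
          exact Or.inr ((Finset.mem_filter.mp haF).2)
        · rintro (hN0 | hfa)
          · exact absurd hN0 (by positivity)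
          · exact Finset.mem_filter.mpr ⟨ha, hfa⟩
  obtain ⟨hl1, hl2, hl3, hl4⟩ := hl F hface hrkF
  -- the ℚ-linear functional induced by l F
  set L : (Fin n → ℚ) →ₗ[ℚ] ℝ := ((l F).restrictScalars ℚ).comp (QtoR n) with hL
  have hLcast : ∀ v : Fin n → ℤ, L (castQ v) = l F (castR v) := by
    intro v
    show l F (QtoR n (castQ v)) = l F (castR v)
    rw [QtoR_castQ]
  -- L vanishes on the span of the face
  have hLF : ∀ u ∈ Submodule.span ℚ ((F.image castQ : Finset (Fin n → ℚ)) : Set (Fin n → ℚ)),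
      L u = 0 := by
    intro u hu
    have hker : Submodule.span ℚ ((F.image castQ : Finset (Fin n → ℚ)) : Set (Fin n → ℚ)) ≤
        LinearMap.ker L := by
      rw [Submodule.span_le]
      rintro y hy
      obtain ⟨a, haF, rfl⟩ := Finset.mem_image.mp (Finset.mem_coe.mp hy)
      refine LinearMap.mem_ker.mpr ?_
      rw [hLcast]
      exact hl1 a haF
    exact LinearMap.mem_ker.mp (hker hu)
  set w : Fin n → ℚ := castQ x with hwdef
  have hfw : f w < 0 := hfx
  have hfwne : f w ≠ 0 := ne_of_lt hfw
  -- span of face = ker f ⊓ span A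
  have hspanEq : Submodule.span ℚ ((F.image castQ : Finset (Fin n → ℚ)) : Set (Fin n → ℚ)) =
      LinearMap.ker f ⊓ Submodule.span ℚ ((A.image castQ : Finset (Fin n → ℚ)) :
        Set (Fin n → ℚ)) := by
    have hKle : Submodule.span ℚ ((F.image castQ : Finset (Fin n → ℚ)) : Set (Fin n → ℚ)) ≤
        LinearMap.ker f ⊓ Submodule.span ℚ ((A.image castQ : Finset (Fin n → ℚ)) :
          Set (Fin n → ℚ)) := by
      rw [Submodule.span_le]
      rintro y hy
      have hy' : y ∈ (A.image castQ).filter (fun y => f y = 0) := by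
        rw [hFimg]; exact Finset.mem_coe.mp hy
      obtain ⟨hyA, hyf⟩ := Finset.mem_filter.mp hy'
      exact ⟨LinearMap.mem_ker.mpr hyf, Submodule.subset_span (Finset.mem_coe.mpr hyA)⟩
    have hKlt : LinearMap.ker f ⊓ Submodule.span ℚ ((A.image castQ : Finset (Fin n → ℚ)) :
        Set (Fin n → ℚ)) < Submodule.span ℚ ((A.image castQ : Finset (Fin n → ℚ)) :
        Set (Fin n → ℚ)) := by
      refine lt_of_le_of_ne inf_le_right ?_
      intro h
      have hw' : w ∈ LinearMap.ker f ⊓ Submodule.span ℚ ((A.image castQ : Finset (Fin n → ℚ)) :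
          Set (Fin n → ℚ)) := by
        rw [h]; exact castQ_mem_span hxZ
      exact hfwne (LinearMap.mem_ker.mp hw'.1)
    have h1 := Submodule.finrank_lt_finrank_of_lt hKlt
    have h2 := Submodule.finrank_mono hKle
    have hrank' : Module.finrank ℚ (Submodule.span ℚ
        ((F.image castQ : Finset (Fin n → ℚ)) : Set (Fin n → ℚ))) + 1 =
        Module.finrank ℚ (Submodule.span ℚ ((A.image castQ : Finset (Fin n → ℚ)) :
          Set (Fin n → ℚ))) := by
      rw [← hFimg]; exact hrank
    exact Submodule.eq_of_le_of_finrank_eq hKle (by omega)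
  -- proportionality
  have hprop : ∀ u ∈ Submodule.span ℚ ((A.image castQ : Finset (Fin n → ℚ)) :
      Set (Fin n → ℚ)), L u = (f u / f w) • L w := by
    intro u hu
    have h1 : u - (f u / f w) • w ∈ LinearMap.ker f ⊓
        Submodule.span ℚ ((A.image castQ : Finset (Fin n → ℚ)) : Set (Fin n → ℚ)) := by
      refine ⟨LinearMap.mem_ker.mpr ?_, sub_mem hu (Submodule.smul_mem _ _ (castQ_mem_span hxZ))⟩
      rw [map_sub, map_smul, smul_eq_mul, div_mul_cancel₀ _ hfwne, sub_self]
    rw [← hspanEq] at h1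
    have h2 := hLF _ h1
    rw [map_sub, map_smul] at h2
    linarith [sub_eq_zero.mp h2]
  have hwspan : w ∈ Submodule.span ℚ ((A.image castQ : Finset (Fin n → ℚ)) :
      Set (Fin n → ℚ)) := castQ_mem_span hxZ
  -- L w < 0
  have hLw : L w < 0 := by
    obtain ⟨a₁, ha₁, hfa₁⟩ : ∃ a ∈ A, 0 < f (castQ a) := by
      by_contra h
      push_neg at h
      have hz : Submodule.span ℚ ((A.image castQ : Finset (Fin n → ℚ)) :
          Set (Fin n → ℚ)) ≤ LinearMap.ker f := by
        rw [Submodule.span_le]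
        rintro y hy
        obtain ⟨a, haA, rfl⟩ := Finset.mem_image.mp (Finset.mem_coe.mp hy)
        exact LinearMap.mem_ker.mpr (le_antisymm (h a haA)
          (hf0 _ (Finset.mem_image_of_mem castQ haA)))
      exact hfwne (LinearMap.mem_ker.mp (hz hwspan))
    rcases lt_or_ge (L w) 0 with h | h
    · exact h
    exfalso
    have ha₁span : castQ a₁ ∈ Submodule.span ℚ ((A.image castQ : Finset (Fin n → ℚ)) :
        Set (Fin n → ℚ)) :=
      Submodule.subset_span (Finset.mem_coe.mpr (Finset.mem_image_of_mem castQ ha₁))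
    have hLa₁ := hprop (castQ a₁) ha₁span
    have hLa₁nonneg : 0 ≤ L (castQ a₁) := by
      rw [hLcast]
      obtain ⟨m, hm⟩ := hl2 a₁ ha₁
      rw [hm]; positivity
    have hcoef : f (castQ a₁) / f w < 0 := div_neg_of_pos_of_neg hfa₁ hfw
    have hLwz : L w = 0 := by
      by_contra hne
      have hLwpos : 0 < L w := lt_of_le_of_ne h (Ne.symm hne)
      have hneg : L (castQ a₁) < 0 := by
        rw [hLa₁, Rat.smul_def]
        exact mul_neg_of_neg_of_pos (by exact_mod_cast hcoef) hLwpos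
      linarith
    obtain ⟨v, hvZ, hv1⟩ := hl4
    have hLv : L (castQ v) = 0 := by
      rw [hprop (castQ v) (castQ_mem_span hvZ), hLwz, smul_zero]
    rw [hLcast, hv1] at hLv
    norm_num at hLv
  have hlx : l F (castR x) < 0 := by rw [← hLcast]; exact hLw
  -- split l F (castR x)
  have hcastRx : castR x = castR (b - aA) + (k₀ : ℝ) • castR c := by
    funext i
    simp only [hx, castR, Pi.add_apply, Pi.smul_apply, Pi.sub_apply, smul_eq_mul]
    push_cast
    ring
  have hlsplit : l F (castR x) = l F (castR (b - aA)) + (k₀ : ℝ) * l F (castR c) := by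
    rw [hcastRx, map_add, map_smul, smul_eq_mul]
  have hcsum : castR c = ∑ a ∈ F₁, castR a := by
    funext i
    simp only [hc, castR, Finset.sum_apply]
    push_cast
    rfl
  have hterm : ∀ a ∈ F₁, l F (castR a) = ((⌊l F (castR a)⌋₊ : ℕ) : ℝ) := by
    intro a ha
    obtain ⟨m, hm⟩ := hl2 a (hF₁A ha)
    rw [hm, Nat.floor_natCast]
  have hlc : l F (castR c) = ((∑ a ∈ F₁, ⌊l F (castR a)⌋₊ : ℕ) : ℝ) := by
    rw [hcsum, map_sum]
    push_cast
    exact Finset.sum_congr rfl hterm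
  have hk₀bound : -(l F (castR (b - aA))) < (k₀ : ℝ) := by
    have hmemP : F ∈ A.powerset := Finset.mem_powerset.mpr hFA
    have h1 : ⌈-(l F (castR (b - aA)))⌉₊ ≤
        A.powerset.sup (fun G => ⌈-(l G (castR (b - aA)))⌉₊) :=
      Finset.le_sup (f := fun G => ⌈-(l G (castR (b - aA)))⌉₊) hmemP
    have h2 := Nat.le_ceil (-(l F (castR (b - aA))))
    have h3 : ⌈-(l F (castR (b - aA)))⌉₊ < k₀ := by
      rw [hk₀]; omega
    calc -(l F (castR (b - aA))) ≤ (⌈-(l F (castR (b - aA)))⌉₊ : ℝ) := h2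
      _ < (k₀ : ℝ) := by exact_mod_cast h3
  have hMzero : l F (castR c) = 0 := by
    by_contra hne
    have hM1 : 1 ≤ ∑ a ∈ F₁, ⌊l F (castR a)⌋₊ := by
      rcases Nat.eq_zero_or_pos (∑ a ∈ F₁, ⌊l F (castR a)⌋₊) with h | h
      · rw [hlc, h] at hne; norm_num at hne
      · exact h
    have hMk : (k₀ : ℝ) ≤ (k₀ : ℝ) * ((∑ a ∈ F₁, ⌊l F (castR a)⌋₊ : ℕ) : ℝ) :=
      le_mul_of_one_le_right (by positivity) (by exact_mod_cast hM1)
    rw [hlsplit, hlc] at hlx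
    linarith
  have hlbaA : l F (castR (b - aA)) < 0 := by
    rw [hlsplit, hMzero, mul_zero, add_zero] at hlx
    exact hlx
  -- F₁ ⊆ F
  have hF₁F : F₁ ⊆ F := by
    intro a ha
    have hsum0 : ∑ a ∈ F₁, l F (castR a) = 0 := by
      rw [← map_sum, ← hcsum]
      exact hMzero
    have hterm0 : l F (castR a) = 0 :=
      (Finset.sum_eq_zero_iff_of_nonneg (fun a' ha' => by
        obtain ⟨m, hm⟩ := hl2 a' (hF₁A ha'); rw [hm]; positivity)).mp hsum0 a ha
    have hLa : L (castQ a) = 0 := by rw [hLcast]; exact hterm0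
    have haspan : castQ a ∈ Submodule.span ℚ ((A.image castQ : Finset (Fin n → ℚ)) :
        Set (Fin n → ℚ)) :=
      Submodule.subset_span (Finset.mem_coe.mpr (Finset.mem_image_of_mem castQ (hF₁A ha)))
    have hprop_a := hprop (castQ a) haspan
    rw [hLa, Rat.smul_def] at hprop_a
    have hdiv : f (castQ a) / f w = 0 := by
      by_contra hne
      exact (mul_ne_zero (by exact_mod_cast hne) (ne_of_lt hLw)) hprop_a.symm
    have hfa0 : f (castQ a) = 0 := by
      rcases div_eq_zero_iff.mp hdiv with h | h
      · exact h
      · exact absurd h hfwne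
    exact Finset.mem_filter.mpr ⟨hF₁A ha, hfa0⟩
  exact ⟨F, hface, hrkF, hF₁F, hlbaA⟩
end

section
/- Let A ⊂ ℤ^n be normal and F a codimension-one face of A, with l_F : ℤA → ℤ the associated surjective functional vanishing on F with l_F(A) ⊆ ℕ. Then l_F(ℕA) = ℕ; in particular there exists a ∈ ℕA with l_F(a) = 1. -/
open Finset

section helpers
variable {n : ℕ}

lemma castR_add (a b : Fin n → ℤ) : castR (a + b) = castR a + castR b := by
  funext i; simp [castR]

lemma castR_neg (a : Fin n → ℤ) : castR (-a) = -castR a := by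
  funext i; simp [castR]

lemma castR_zero : castR (0 : Fin n → ℤ) = 0 := by
  funext i; simp [castR]

lemma castR_nsmul (k : ℕ) (a : Fin n → ℤ) : castR (k • a) = (k : ℝ) • castR a := by
  funext i; simp [castR]

/-- castR as an AddMonoidHom. -/
def castRhom (n : ℕ) : (Fin n → ℤ) →+ (Fin n → ℝ) := AddMonoidHom.mk' castR castR_add

lemma castQ_add (a b : Fin n → ℤ) : castQ (a + b) = castQ a + castQ b := by
  funext i; simp [castQ]

lemma castQ_inj : Function.Injective (castQ (n := n)) := by
  intro a b h
  funext i
  have := congrFun h i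
  simpa [castQ] using this

/-- cast from ℚ-vectors to ℝ-vectors -/
def castQR (x : Fin n → ℚ) : Fin n → ℝ := fun i => (x i : ℝ)

lemma castQR_castQ (a : Fin n → ℤ) : castQR (castQ a) = castR a := by
  funext i; simp [castQR, castQ, castR]

lemma castQR_add (x y : Fin n → ℚ) : castQR (x + y) = castQR x + castQR y := by
  funext i; simp [castQR]

lemma castQR_smul (q : ℚ) (x : Fin n → ℚ) : castQR (q • x) = (q : ℝ) • castQR x := by
  funext i; simp [castQR]

lemma castQR_zero : castQR (0 : Fin n → ℚ) = 0 := by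
  funext i; simp [castQR]

def castQRhom (n : ℕ) : (Fin n → ℚ) →+ (Fin n → ℝ) := AddMonoidHom.mk' castQR castQR_add

end helpers

/-- A normal, F a codimension-one face with primitive functional l.
Then l(ℕA) = ℕ; in particular some a ∈ ℕA has l(a) = 1. -/
theorem image_nat_of_codimOne (n : ℕ) (A F : Finset (Fin n → ℤ))
    (hA : IsNormal A) (hF : IsFace A F) (hcodim : rkQ F + 1 = rkQ A)
    (l : (Fin n → ℝ) →ₗ[ℝ] ℝ)
    (hl0 : ∀ a ∈ F, l (castR a) = 0)
    (hlA : ∀ a ∈ A, ∃ m : ℕ, l (castR a) = m)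
    (hlZ : ∀ v ∈ AddSubgroup.closure (A : Set (Fin n → ℤ)), ∃ m : ℤ, l (castR v) = m)
    (hsurj : ∃ v ∈ AddSubgroup.closure (A : Set (Fin n → ℤ)), l (castR v) = 1) :
    (∀ m : ℕ, ∃ v ∈ AddSubmonoid.closure (A : Set (Fin n → ℤ)), l (castR v) = m) ∧
    (∀ v ∈ AddSubmonoid.closure (A : Set (Fin n → ℤ)), ∃ m : ℕ, l (castR v) = m) ∧
    (∃ v ∈ AddSubmonoid.closure (A : Set (Fin n → ℤ)), l (castR v) = 1) := by
  classical
  obtain ⟨w, hwZ, hw1⟩ := hsurj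
  -- there is some b ∈ A with l (castR b) ≠ 0
  have hbexists : ∃ b ∈ A, l (castR b) ≠ 0 := by
    by_contra hno
    push_neg at hno
    have hall : ∀ v ∈ AddSubgroup.closure (A : Set (Fin n → ℤ)), l (castR v) = 0 := by
      intro v hv
      induction hv using AddSubgroup.closure_induction with
      | mem a ha => exact hno a ha
      | zero => simp [castR_zero]
      | add x y hx hy ihx ihy => rw [castR_add, map_add, ihx, ihy, add_zero]
      | neg x hx ihx => rw [castR_neg, map_neg, ihx, neg_zero]
    rw [hall w hwZ] at hw1
    norm_num at hw1
  obtain ⟨b, hbA, hbne⟩ := hbexists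
  obtain ⟨N, hN⟩ := hlA b hbA
  have hNpos : (0 : ℝ) < N := by
    rcases Nat.eq_zero_or_pos N with h | h
    · exfalso; apply hbne; rw [hN, h]; simp
    · exact_mod_cast h
  -- l vanishes on the ℚ-span of castQ '' F
  have hspanF0 : ∀ x ∈ Submodule.span ℚ (castQ '' (F : Set (Fin n → ℤ))),
      l (castQR x) = 0 := by
    intro x hx
    induction hx using Submodule.span_induction with
    | mem y hy =>
      obtain ⟨a, haF, rfl⟩ := hy
      rw [castQR_castQ]
      exact hl0 a haF
    | zero => simp [castQR_zero]
    | add x y hx hy ihx ihy => rw [castQR_add, map_add, ihx, ihy, add_zero]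
    | smul q x hx ihx => rw [castQR_smul, map_smul, ihx, smul_zero]
  -- b is not in the span of F
  have hbnot : castQ b ∉ Submodule.span ℚ (castQ '' (F : Set (Fin n → ℤ))) := by
    intro hmem
    apply hbne
    have := hspanF0 _ hmem
    rwa [castQR_castQ] at this
  set VF := Submodule.span ℚ (castQ '' (F : Set (Fin n → ℤ))) with hVF
  set VA := Submodule.span ℚ (castQ '' (A : Set (Fin n → ℤ))) with hVA
  have hbVA : castQ b ∈ VA := Submodule.subset_span ⟨b, hbA, rfl⟩
  have hFA : VF ≤ VA := Submodule.span_mono (Set.image_mono (by exact_mod_cast hF.1))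
  set W := VF ⊔ Submodule.span ℚ {castQ b} with hW
  have hWVA : W ≤ VA := sup_le hFA (by
    rw [Submodule.span_singleton_le_iff_mem]; exact hbVA)
  have hVFW : VF < W := by
    refine lt_of_le_of_ne le_sup_left (fun h => hbnot ?_)
    rw [h]
    exact le_sup_right (α := Submodule ℚ (Fin n → ℚ)) (Submodule.mem_span_singleton_self _)
  have hWeq : W = VA := by
    apply Submodule.eq_of_le_of_finrank_le hWVA
    have h1 : Module.finrank ℚ VF < Module.finrank ℚ W :=
      Submodule.finrank_lt_finrank_of_lt hVFW
    have h2 : Module.finrank ℚ W ≤ Module.finrank ℚ VA := Submodule.finrank_mono hWVA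
    have h3 : Module.finrank ℚ VF + 1 = Module.finrank ℚ VA := hcodim
    omega
  -- castQ w ∈ VA
  have hmap : ∀ x ∈ AddSubgroup.closure (A : Set (Fin n → ℤ)), castQ x ∈ VA := by
    intro x hx
    induction hx using AddSubgroup.closure_induction with
    | mem a ha => exact Submodule.subset_span ⟨a, ha, rfl⟩
    | zero =>
      have : castQ (0 : Fin n → ℤ) = 0 := by funext i; simp [castQ]
      rw [this]; exact zero_mem _
    | add x y hx hy ihx ihy => rw [castQ_add]; exact add_mem ihx ihy
    | neg x hx ihx =>
      have : castQ (-x) = -castQ x := by funext i; simp [castQ]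
      rw [this]; exact neg_mem ihx
  have hwVA : castQ w ∈ VA := hmap w hwZ
  rw [← hWeq] at hwVA
  obtain ⟨f, hfVF, g, hgspan, hfg⟩ := Submodule.mem_sup.mp hwVA
  obtain ⟨c, rfl⟩ := Submodule.mem_span_singleton.mp hgspan
  -- coefficients of f over F
  obtain ⟨gq, -, hgq⟩ := Submodule.mem_span_finset.mp (by
    rw [hVF, ← Finset.coe_image] at hfVF; exact hfVF :
    f ∈ Submodule.span ℚ ((F.image castQ : Finset (Fin n → ℚ)) : Set (Fin n → ℚ)))
  set q : (Fin n → ℤ) → ℚ := fun a => gq (castQ a) with hq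
  have hfeq : f = ∑ a ∈ F, q a • castQ a := by
    rw [← hgq, Finset.sum_image (fun x _ y _ h => castQ_inj h)]
  -- the value c equals 1 / N
  have hlf : l (castQR f) = 0 := hspanF0 f hfVF
  have hcval : (c : ℝ) * N = 1 := by
    have : castQR (castQ w) = castQR f + castQR (c • castQ b) := by
      rw [← castQR_add, hfg]
    rw [castQR_castQ, castQR_smul, castQR_castQ] at this
    have h2 := congrArg l this
    rw [hw1, map_add, hlf, zero_add, map_smul, smul_eq_mul, hN] at h2
    linarith
  have hcpos : 0 ≤ c := by
    by_contra hc
    push_neg at hc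
    have : (c : ℝ) < 0 := by exact_mod_cast hc
    nlinarith
  -- choose k large enough
  set B : ℚ := ∑ a ∈ F, |q a| with hB
  set k : ℕ := ⌈B⌉₊ with hk
  have hkq : ∀ a ∈ F, 0 ≤ q a + k := by
    intro a ha
    have h1 : -q a ≤ |q a| := neg_le_abs _
    have h2 : |q a| ≤ B := Finset.single_le_sum (fun i _ => abs_nonneg (q i)) ha
    have h3 : B ≤ (k : ℚ) := Nat.le_ceil B
    linarith
  set s : Fin n → ℤ := ∑ a ∈ F, a with hs
  set v : Fin n → ℤ := w + k • s with hv
  -- v ∈ ℤA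
  have hsZ : s ∈ AddSubgroup.closure (A : Set (Fin n → ℤ)) := by
    apply sum_mem
    intro a ha
    exact AddSubgroup.subset_closure (hF.1 ha)
  have hvZ : v ∈ AddSubgroup.closure (A : Set (Fin n → ℤ)) :=
    add_mem hwZ (nsmul_mem hsZ k)
  -- l (castR s) = 0
  have hcastRs : castR s = ∑ a ∈ F, castR a := by
    rw [hs]
    exact map_sum (castRhom n) _ _
  have hls : l (castR s) = 0 := by
    rw [hcastRs, map_sum]
    exact Finset.sum_eq_zero hl0
  -- l (castR v) = 1
  have hlv : l (castR v) = 1 := by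
    rw [hv, castR_add, castR_nsmul, map_add, map_smul, hls, smul_zero, add_zero, hw1]
  -- castR v in the real cone
  have hbnF : b ∉ F := fun hbF => hbne (hl0 b hbF)
  have hvcone : castR v ∈ realCone A := by
    refine ⟨fun a => if a ∈ F then (q a : ℝ) + k else if a = b then (c : ℝ) else 0,
      ?_, ?_⟩
    · intro a
      beta_reduce
      by_cases haF : a ∈ F
      · rw [if_pos haF]
        have := hkq a haF
        have h2 : ((0 : ℚ) : ℝ) ≤ ((q a + (k : ℚ) : ℚ) : ℝ) := by exact_mod_cast this
        push_cast at h2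
        linarith
      · rw [if_neg haF]
        by_cases hab : a = b
        · rw [if_pos hab]; exact_mod_cast hcpos
        · rw [if_neg hab]
    · have hsum : ∑ a ∈ A, (if a ∈ F then (q a : ℝ) + k else if a = b then (c : ℝ) else 0) • castR a
          = ∑ a ∈ F, ((q a : ℝ) + (k : ℝ)) • castR a + (c : ℝ) • castR b := by
        rw [← Finset.sum_sdiff hF.1]
        have h1 : ∑ a ∈ F, (if a ∈ F then (q a : ℝ) + k else if a = b then (c : ℝ) else 0) • castR a
            = ∑ a ∈ F, ((q a : ℝ) + (k : ℝ)) • castR a :=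
          Finset.sum_congr rfl (fun a ha => by simp [ha])
        have h2 : ∑ a ∈ A \ F, (if a ∈ F then (q a : ℝ) + k else if a = b then (c : ℝ) else 0) • castR a
            = (c : ℝ) • castR b := by
          have hbm : b ∈ A \ F := Finset.mem_sdiff.mpr ⟨hbA, hbnF⟩
          rw [Finset.sum_congr rfl (fun a ha => by
            have haF : a ∉ F := (Finset.mem_sdiff.mp ha).2
            rw [if_neg haF, ite_smul, zero_smul] :
            ∀ a ∈ A \ F, _ = if a = b then (c : ℝ) • castR a else 0)]
          rw [Finset.sum_ite_eq' (A \ F) b (fun a => (c : ℝ) • castR a), if_pos hbm]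
        rw [h1, h2, add_comm]
      beta_reduce
      rw [hsum]
      have hcastw : castR w = ∑ a ∈ F, (q a : ℝ) • castR a + (c : ℝ) • castR b := by
        have h0 : castR w = castQR (castQ w) := (castQR_castQ w).symm
        rw [h0, ← hfg, castQR_add, castQR_smul, castQR_castQ, hfeq]
        congr 1
        rw [show castQR (∑ a ∈ F, q a • castQ a) = ∑ a ∈ F, castQR (q a • castQ a) from
          map_sum (castQRhom n) _ _]
        exact Finset.sum_congr rfl (fun a _ => by rw [castQR_smul, castQR_castQ])
      rw [hv, castR_add, castR_nsmul, hcastw, hcastRs, Finset.smul_sum]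
      rw [show ∑ a ∈ F, ((q a : ℝ) + (k : ℝ)) • castR a
          = ∑ a ∈ F, ((q a : ℝ) • castR a + (k : ℝ) • castR a) from
        Finset.sum_congr rfl (fun a _ => add_smul _ _ _), Finset.sum_add_distrib]
      abel
  have hvN : v ∈ AddSubmonoid.closure (A : Set (Fin n → ℤ)) := (hA v).mp ⟨hvZ, hvcone⟩
  refine ⟨?_, ?_, ⟨v, hvN, hlv⟩⟩
  · intro m
    refine ⟨m • v, AddSubmonoid.nsmul_mem _ hvN m, ?_⟩
    rw [castR_nsmul, map_smul, hlv, smul_eq_mul, mul_one]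
  · intro x hx
    induction hx using AddSubmonoid.closure_induction with
    | mem a ha => exact hlA a ha
    | zero => exact ⟨0, by simp [castR_zero]⟩
    | add x y hx hy ihx ihy =>
      obtain ⟨m1, hm1⟩ := ihx
      obtain ⟨m2, hm2⟩ := ihy
      exact ⟨m1 + m2, by rw [castR_add, map_add, hm1, hm2]; push_cast; ring⟩
end

section
/- Let A ⊂ ℤ^n be normal and F a face of A. Then the short exact sequence 0 → ℤF → ℤA → ℤA/ℤF → 0 splits; equivalently, ℤA/ℤF is free, i.e., ℤA ∩ ℚF = ℤF. -/
open Finset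

lemma castQ_injective {n : ℕ} : Function.Injective (castQ (n := n)) := by
  intro a b hab
  funext i
  have := congrFun hab i
  simpa [castQ] using this

lemma den_mul_int (q : ℚ) (N : ℕ) (h : q.den ∣ N) : ∃ z : ℤ, (z : ℚ) = (N : ℚ) * q := by
  obtain ⟨k, hk⟩ := h
  refine ⟨k * q.num, ?_⟩
  have hq : (q.den : ℚ) * q = q.num := by
    rw [mul_comm]; exact_mod_cast q.mul_den_eq_num
  push_cast
  rw [hk]
  push_cast
  rw [mul_comm (q.den : ℚ), mul_assoc, hq, mul_comm]

/-- A normal, F a face of A.  Then ℤA ∩ ℚF = ℤF, i.e. ℤA/ℤF is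
torsion-free (the sequence 0 → ℤF → ℤA → ℤA/ℤF → 0 splits). -/
theorem zspan_inter_qspan (n : ℕ) (A F : Finset (Fin n → ℤ))
    (hA : IsNormal A) (hF : IsFace A F) :
    ∀ v ∈ AddSubgroup.closure (A : Set (Fin n → ℤ)),
      (castQ v ∈ Submodule.span ℚ (castQ '' (F : Set (Fin n → ℤ))) ↔
        v ∈ AddSubgroup.closure (F : Set (Fin n → ℤ))) := by
  obtain ⟨hFA, h, hprop⟩ := hF
  have hle : AddSubgroup.closure (F : Set (Fin n → ℤ)) ≤
      AddSubgroup.closure (A : Set (Fin n → ℤ)) :=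
    AddSubgroup.closure_mono (Finset.coe_subset.mpr hFA)
  -- h vanishes on ℤF
  have hker : ∀ x, x ∈ AddSubgroup.closure (F : Set (Fin n → ℤ)) →
      ∀ hx : x ∈ AddSubgroup.closure (A : Set (Fin n → ℤ)), h ⟨x, hx⟩ = 0 := by
    intro x hxF
    induction hxF using AddSubgroup.closure_induction with
    | mem y hy =>
        intro hx
        exact (hprop y (hFA (Finset.mem_coe.mp hy))).2.mp (Finset.mem_coe.mp hy)
    | zero =>
        intro hx
        exact map_zero h
    | add x y hx' hy' ihx ihy =>
        intro hx
        have e : (⟨x + y, hx⟩ : AddSubgroup.closure (A : Set (Fin n → ℤ))) =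
            ⟨x, hle hx'⟩ + ⟨y, hle hy'⟩ := rfl
        rw [e, map_add, ihx (hle hx'), ihy (hle hy'), add_zero]
    | neg x hx' ihx =>
        intro hx
        have e : (⟨-x, hx⟩ : AddSubgroup.closure (A : Set (Fin n → ℤ))) =
            -⟨x, hle hx'⟩ := rfl
        rw [e, map_neg, ihx (hle hx'), neg_zero]
  intro v hv
  constructor
  · intro hspan
    -- extract rational coefficients
    rw [← Finset.coe_image] at hspan
    obtain ⟨g, -, hg⟩ := Submodule.mem_span_finset.mp hspan
    rw [Finset.sum_image (fun x _ y _ hxy => castQ_injective hxy)] at hg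
    set c : (Fin n → ℤ) → ℚ := fun a => g (castQ a) with hc
    have hc_i : ∀ i, ∑ a ∈ F, c a * (a i : ℚ) = (v i : ℚ) := by
      intro i
      have := congrFun hg i
      simpa [castQ, Finset.sum_apply] using this
    -- clear denominators
    set N : ℕ := ∏ f ∈ F, (c f).den with hNdef
    have hN : 0 < N := Finset.prod_pos fun f _ => (c f).pos
    set z : (Fin n → ℤ) → ℤ := fun f => ((N : ℚ) * c f).num with hzdef
    have hz : ∀ f ∈ F, (z f : ℚ) = (N : ℚ) * c f := by
      intro f hf
      obtain ⟨w, hw⟩ := den_mul_int (c f) N (Finset.dvd_prod_of_mem _ hf)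
      rw [← hw]
      simp [hzdef, ← hw]
    have hNv : (N : ℤ) • v = ∑ f ∈ F, z f • f := by
      apply castQ_injective
      funext i
      have lhs : castQ ((N : ℤ) • v) i = (N : ℚ) * (v i : ℚ) := by
        simp [castQ]
      have rhs : castQ (∑ f ∈ F, z f • f) i = ∑ f ∈ F, (z f : ℚ) * (f i : ℚ) := by
        simp [castQ, Finset.sum_apply]
      rw [lhs, rhs]
      calc (N : ℚ) * (v i : ℚ) = (N : ℚ) * ∑ a ∈ F, c a * (a i : ℚ) := by rw [hc_i i]
        _ = ∑ f ∈ F, (N : ℚ) * (c f * (f i : ℚ)) := by rw [Finset.mul_sum]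
        _ = ∑ f ∈ F, (z f : ℚ) * (f i : ℚ) := by
            refine Finset.sum_congr rfl fun f hf => ?_
            rw [hz f hf, mul_assoc]
    have hNvF : (N : ℤ) • v ∈ AddSubgroup.closure (F : Set (Fin n → ℤ)) := by
      rw [hNv]
      exact sum_mem fun f hf => AddSubgroup.zsmul_mem _ (AddSubgroup.subset_closure hf) _
    -- h(v) = 0
    have hv0 : h ⟨v, hv⟩ = 0 := by
      have hNv0 : h ⟨(N : ℤ) • v, hle hNvF⟩ = 0 := hker _ hNvF _
      have e : (⟨(N : ℤ) • v, hle hNvF⟩ : AddSubgroup.closure (A : Set (Fin n → ℤ))) =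
          (N : ℤ) • ⟨v, hv⟩ := rfl
      rw [e, map_zsmul, smul_eq_mul] at hNv0
      have hNne : (N : ℤ) ≠ 0 := by exact_mod_cast hN.ne'
      exact (mul_eq_zero.mp hNv0).resolve_left hNne
    -- translate into the cone
    set m : ℕ := F.sup fun f => (⌈-(c f)⌉).toNat with hmdef
    have hm : ∀ f ∈ F, 0 ≤ c f + m := by
      intro f hf
      have h1 : -(c f) ≤ (((⌈-(c f)⌉).toNat : ℤ) : ℚ) := by
        refine le_trans (Int.le_ceil _) ?_
        have h0 : (⌈-(c f)⌉) ≤ ((⌈-(c f)⌉).toNat : ℤ) := Int.self_le_toNat _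
        exact_mod_cast h0
      have h2 : (((⌈-(c f)⌉).toNat : ℤ) : ℚ) ≤ (m : ℚ) := by
        exact_mod_cast Finset.le_sup (f := fun f => (⌈-(c f)⌉).toNat) hf
      linarith
    set s : Fin n → ℤ := ∑ f ∈ F, f with hsdef
    have hsF : s ∈ AddSubgroup.closure (F : Set (Fin n → ℤ)) :=
      sum_mem fun f hf => AddSubgroup.subset_closure hf
    set w : Fin n → ℤ := v + (m : ℤ) • s with hwdef
    have hwA : w ∈ AddSubgroup.closure (A : Set (Fin n → ℤ)) :=
      add_mem hv (AddSubgroup.zsmul_mem _ (hle hsF) _)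
    have hw0 : h ⟨w, hwA⟩ = 0 := by
      have e : (⟨w, hwA⟩ : AddSubgroup.closure (A : Set (Fin n → ℤ))) =
          ⟨v, hv⟩ + (m : ℤ) • ⟨s, hle hsF⟩ := rfl
      rw [e, map_add, map_zsmul, hv0, hker _ hsF (hle hsF), smul_zero, add_zero]
    have hcone : castR w ∈ realCone A := by
      refine ⟨fun a => if a ∈ F then ((c a : ℝ) + m) else 0, fun a => ?_, ?_⟩
      · dsimp only
        split
        · next hf =>
            have hq := hm a hf
            have : ((0 : ℚ) : ℝ) ≤ ((c a + m : ℚ) : ℝ) := by exact_mod_cast hq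
            push_cast at this
            linarith
        · exact le_refl 0
      · funext i
        have hsub : ∑ a ∈ A, (if a ∈ F then ((c a : ℝ) + m) else 0) • castR a
            = ∑ a ∈ F, ((c a : ℝ) + m) • castR a := by
          rw [← Finset.sum_subset hFA (fun a _ hna => by simp [hna])]
          exact Finset.sum_congr rfl fun a ha => by simp [ha]
        rw [hsub]
        have hvR : (v i : ℝ) = ∑ a ∈ F, (c a : ℝ) * (a i : ℝ) := by
          have := congrArg (fun q : ℚ => (q : ℝ)) (hc_i i)
          push_cast at this
          linarith [this]
        have lhs : castR w i = (v i : ℝ) + (m : ℝ) * ∑ a ∈ F, (a i : ℝ) := by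
          simp only [castR, hwdef, Pi.add_apply, Pi.smul_apply, hsdef,
            Finset.sum_apply, smul_eq_mul]
          push_cast
          ring
        rw [Finset.sum_apply]
        rw [lhs, hvR]
        rw [Finset.mul_sum, ← Finset.sum_add_distrib]
        refine Finset.sum_congr rfl fun a ha => ?_
        simp [castR]
        ring
    have hwN : w ∈ AddSubmonoid.closure (A : Set (Fin n → ℤ)) := (hA w).mp ⟨hwA, hcone⟩
    obtain ⟨l, hl, hlsum⟩ := AddSubmonoid.exists_multiset_of_mem_closure hwN
    have key : ∀ l : Multiset (Fin n → ℤ), (∀ y ∈ l, y ∈ (A : Set (Fin n → ℤ))) →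
        ∀ hx : l.sum ∈ AddSubgroup.closure (A : Set (Fin n → ℤ)),
        0 ≤ h ⟨l.sum, hx⟩ ∧ (h ⟨l.sum, hx⟩ = 0 →
          l.sum ∈ AddSubgroup.closure (F : Set (Fin n → ℤ))) := by
      intro l
      induction l using Multiset.induction_on with
      | empty =>
          intro _ hx
          have e : (⟨(0 : Multiset (Fin n → ℤ)).sum, hx⟩ :
              AddSubgroup.closure (A : Set (Fin n → ℤ))) = 0 := rfl
          rw [e, map_zero]
          exact ⟨le_refl 0, fun _ => by simp [Multiset.sum_zero, zero_mem]⟩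
      | cons y t ih =>
          intro hmem hx
          have hyA : y ∈ A := hmem y (Multiset.mem_cons_self _ _)
          have htmem : ∀ x ∈ t, x ∈ (A : Set (Fin n → ℤ)) :=
            fun x hx' => hmem x (Multiset.mem_cons_of_mem hx')
          have htA : t.sum ∈ AddSubgroup.closure (A : Set (Fin n → ℤ)) :=
            multiset_sum_mem _ fun x hx' => AddSubgroup.subset_closure (htmem x hx')
          have hyAc : y ∈ AddSubgroup.closure (A : Set (Fin n → ℤ)) :=
            AddSubgroup.subset_closure (hmem y (Multiset.mem_cons_self _ _))
          have e : (⟨(y ::ₘ t).sum, hx⟩ : AddSubgroup.closure (A : Set (Fin n → ℤ))) =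
              ⟨y, hyAc⟩ + ⟨t.sum, htA⟩ := Subtype.ext (Multiset.sum_cons y t)
          rw [e, map_add]
          have hy0 := (hprop y hyA).1
          obtain ⟨ih1, ih2⟩ := ih htmem htA
          refine ⟨add_nonneg hy0 ih1, fun h0 => ?_⟩
          have hyz : h ⟨y, hyAc⟩ = 0 := by omega
          have htz : h ⟨t.sum, htA⟩ = 0 := by omega
          have hyF : y ∈ F := (hprop y hyA).2.mpr hyz
          rw [Multiset.sum_cons]
          exact add_mem (AddSubgroup.subset_closure (Finset.mem_coe.mpr hyF)) (ih2 htz)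
    have hwF : w ∈ AddSubgroup.closure (F : Set (Fin n → ℤ)) := by
      have hlx : l.sum ∈ AddSubgroup.closure (A : Set (Fin n → ℤ)) := hlsum.symm ▸ hwA
      have := (key l hl hlx).2
      have hsum0 : h ⟨l.sum, hlx⟩ = 0 := by
        have e : (⟨l.sum, hlx⟩ : AddSubgroup.closure (A : Set (Fin n → ℤ))) =
            ⟨w, hwA⟩ := Subtype.ext hlsum
        rw [e]; exact hw0
      exact hlsum ▸ this hsum0
    have hv' : v = w - (m : ℤ) • s := by
      rw [hwdef]; abel
    rw [hv']
    exact sub_mem hwF (AddSubgroup.zsmul_mem _ hsF _)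
  · intro hvF
    clear hv
    induction hvF using AddSubgroup.closure_induction with
    | mem y hy => exact Submodule.subset_span ⟨y, hy, rfl⟩
    | zero =>
        have : castQ (0 : Fin n → ℤ) = 0 := by funext i; simp [castQ]
        rw [this]; exact zero_mem _
    | add x y _ _ ihx ihy =>
        have : castQ (x + y) = castQ x + castQ y := by funext i; simp [castQ]
        rw [this]; exact add_mem ihx ihy
    | neg x _ ihx =>
        have : castQ (-x) = -castQ x := by funext i; simp [castQ]
        rw [this]; exact neg_mem ihx
end

section
/- Let A ⊂ ℤ^n with ℤA = ℤ^n, and suppose F_1, ..., F_k are codimension-one faces of A such that every l-fold intersection F_{i_1} ∩ ... ∩ F_{i_l} (for 1 ≤ i_1 < ... < i_l ≤ k) is a face of A of codimension l. Let F' = F_1 ∩ ... ∩ F_k and q : ℝ^n → ℝ^n/ℝF' the quotient. Then q(ℝ_{≥0}A) is a simplicial cone of dimension k, i.e., it is generated by k linearly independent vectors. -/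
open Finset

section Helpers
open Matrix

lemma pi_int_repr {n : ℕ} (a : Fin n → ℤ) :
    a = ∑ j, a j • Pi.single j (1:ℤ) := by
  funext m
  simp [Finset.sum_apply, Pi.single_apply]

lemma addhom_repr {n : ℕ} (g : (Fin n → ℤ) →+ ℤ) (a : Fin n → ℤ) :
    g a = ∑ j, a j * g (Pi.single j 1) := by
  conv_lhs => rw [pi_int_repr a, map_sum]
  simp only [map_zsmul, smul_eq_mul]

lemma indep_transfer {n : ℕ} {ι : Type*} [Fintype ι] (w : ι → (Fin n → ℚ))
    (hw : LinearIndependent ℚ w) :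
    LinearIndependent ℝ (fun i => (fun j => ((w i j : ℚ) : ℝ))) := by
  classical
  set M : Matrix (Fin n) ι ℚ := Matrix.of fun i j => w j i with hM
  have hf : LinearMap.ker (Matrix.toLin' M) = ⊥ := by
    rw [LinearMap.ker_eq_bot']
    intro x hx
    have h := Fintype.linearIndependent_iff.mp hw x ?_
    · funext i; exact h i
    · funext i
      have := congrFun hx i
      simpa [Matrix.toLin'_apply, Matrix.mulVec, dotProduct, hM,
        Finset.sum_apply, mul_comm] using this
  obtain ⟨g, hg⟩ := LinearMap.exists_leftInverse_of_injective _ hf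
  set N := LinearMap.toMatrix' g with hN
  have hNM : N * M = 1 := by
    rw [hN, ← LinearMap.toMatrix'_toLin' M, ← LinearMap.toMatrix'_comp, hg,
      LinearMap.toMatrix'_id]
  set c : ℚ →+* ℝ := Rat.castHom ℝ
  have hNMr : (N.map c) * (M.map c) = 1 := by
    rw [← Matrix.map_mul, hNM, Matrix.map_one c (map_zero c) (map_one c)]
  rw [Fintype.linearIndependent_iff]
  intro v hv
  have hMv : (M.map c) *ᵥ v = 0 := by
    funext i
    have := congrFun hv i
    simpa [Matrix.mulVec, dotProduct, hM, Finset.sum_apply, mul_comm] using this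
  have : v = 0 := by
    calc v = ((N.map c) * (M.map c)) *ᵥ v := by rw [hNMr, Matrix.one_mulVec]
    _ = (N.map c) *ᵥ ((M.map c) *ᵥ v) := by rw [Matrix.mulVec_mulVec]
    _ = 0 := by rw [hMv, Matrix.mulVec_zero]
  exact fun i => congrFun this i

lemma rkQ_le_finrank_real {n : ℕ} (S : Finset (Fin n → ℤ)) :
    rkQ S ≤ Module.finrank ℝ (Submodule.span ℝ (castR '' (S : Set (Fin n → ℤ)))) := by
  classical
  obtain ⟨b, hb_sub, hb_span, hb_ind⟩ :=
    exists_linearIndependent ℚ (castQ '' (S : Set (Fin n → ℤ)))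
  have hbfin : b.Finite := (S.finite_toSet.image castQ).subset hb_sub
  haveI := hbfin.fintype
  have h1 : rkQ S = Fintype.card b := by
    rw [rkQ, ← hb_span]
    rw [finrank_span_set_eq_card hb_ind, Set.toFinset_card]
  set vR : b → (Fin n → ℝ) := fun x => (fun j => (((x : Fin n → ℚ)) j : ℝ)) with hvR
  have hvind : LinearIndependent ℝ vR := indep_transfer _ hb_ind
  have hrange : Set.range vR ⊆ (Submodule.span ℝ (castR '' (S : Set (Fin n → ℤ))) : Set (Fin n → ℝ)) := by
    rintro - ⟨x, rfl⟩
    obtain ⟨s, hs, hx⟩ := hb_sub x.2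
    apply Submodule.subset_span
    refine ⟨s, hs, ?_⟩
    funext j
    have := congrFun hx j
    simp only [castQ] at this
    simp [hvR, castR, ← this]
  have h2 : Submodule.span ℝ (Set.range vR) ≤ Submodule.span ℝ (castR '' (S : Set (Fin n → ℤ))) :=
    Submodule.span_le.mpr hrange
  have h3 := Submodule.finrank_mono h2
  rwa [finrank_span_eq_card hvind, ← h1] at h3

lemma rkQ_top {n : ℕ} (A : Finset (Fin n → ℤ))
    (hZA : AddSubgroup.closure (A : Set (Fin n → ℤ)) = ⊤) : rkQ A = n := by
  classical
  have hmem : ∀ x : Fin n → ℤ, castQ x ∈ Submodule.span ℚ (castQ '' (A : Set (Fin n → ℤ))) := by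
    intro x
    have hx : x ∈ AddSubgroup.closure (A : Set (Fin n → ℤ)) := by rw [hZA]; trivial
    induction hx using AddSubgroup.closure_induction with
    | mem y hy => exact Submodule.subset_span ⟨y, hy, rfl⟩
    | zero => -- zero
      have : castQ (0 : Fin n → ℤ) = 0 := by funext j; simp [castQ]
      rw [this]; exact Submodule.zero_mem _
    | add a b _ _ ha hb =>
      have : castQ (a + b) = castQ a + castQ b := by funext j; simp [castQ]
      rw [this]; exact Submodule.add_mem _ ha hb
    | neg a _ ha =>
      have : castQ (-a) = -castQ a := by funext j; simp [castQ]
      rw [this]; exact Submodule.neg_mem _ ha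
  have hspan : Submodule.span ℚ (castQ '' (A : Set (Fin n → ℤ))) = ⊤ := by
    rw [Submodule.eq_top_iff']
    intro x
    have hx : x = ∑ j, x j • (Pi.single j 1 : Fin n → ℚ) := by
      funext m
      simp [Finset.sum_apply, Pi.single_apply]
    rw [hx]
    refine Submodule.sum_mem _ fun j _ => Submodule.smul_mem _ _ ?_
    have : Pi.single j (1:ℚ) = castQ (Pi.single j (1:ℤ)) := by
      funext m
      simp [castQ, Pi.single_apply]
    rw [this]
    exact hmem _
  rw [rkQ, hspan, finrank_top, Module.finrank_fin_fun]

end Helpers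

/-- ℤA = ℤ^n, F_1, …, F_k codimension-one faces of A whose l-fold
intersections are faces of codimension l.  Let F' be the intersection of all of
them and q : ℝ^n → ℝ^n/ℝF' the quotient map.  Then q(ℝ≥0A) is a simplicial cone
generated by k linearly independent vectors. -/
theorem quotient_cone_simplicial (n k : ℕ) (hk : 0 < k) (A : Finset (Fin n → ℤ))
    (hZA : AddSubgroup.closure (A : Set (Fin n → ℤ)) = ⊤)
    (F : Fin k → Finset (Fin n → ℤ))
    (hF : ∀ s : Finset (Fin k), ∀ hs : s.Nonempty,
      IsFace A (s.inf' hs F) ∧ rkQ (s.inf' hs F) + s.card = rkQ A)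
    (W : Submodule ℝ (Fin n → ℝ))
    (hW : W = Submodule.span ℝ (castR ''
      ((Finset.univ.inf' (Finset.univ_nonempty_iff.mpr ⟨⟨0, hk⟩⟩) F : Finset (Fin n → ℤ)) :
        Set (Fin n → ℤ)))) :
    ∃ v : Fin k → ((Fin n → ℝ) ⧸ W), LinearIndependent ℝ v ∧
      W.mkQ '' realCone A =
        {x | ∃ c : Fin k → ℝ, (∀ i, 0 ≤ c i) ∧ x = ∑ i, c i • v i} := by
  classical
  set F' : Finset (Fin n → ℤ) :=
    Finset.univ.inf' (Finset.univ_nonempty_iff.mpr ⟨⟨0, hk⟩⟩) F with hF'def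
  -- face functionals
  have hface : ∀ i : Fin k, ∃ g : (Fin n → ℤ) →+ ℤ,
      ∀ a ∈ A, 0 ≤ g a ∧ (a ∈ F i ↔ g a = 0) := by
    intro i
    obtain ⟨hsub, h, hh⟩ := (hF {i} (singleton_nonempty i)).1
    refine ⟨h.comp
      { toFun := fun x => (⟨x, by rw [hZA]; trivial⟩ :
          AddSubgroup.closure (A : Set (Fin n → ℤ)))
        map_zero' := rfl
        map_add' := fun _ _ => rfl }, ?_⟩
    intro a ha
    have h2 := hh a ha
    simp only [Finset.inf'_singleton] at h2
    exact h2
  choose g hg using hface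
  -- extensions to ℝ-linear functionals
  set L : Fin k → ((Fin n → ℝ) →ₗ[ℝ] ℝ) := fun i =>
    ∑ j, ((g i (Pi.single j 1) : ℝ) • LinearMap.proj j) with hLdef
  have hLcast : ∀ i a, L i (castR a) = (g i a : ℝ) := by
    intro i a
    rw [addhom_repr (g i) a]
    push_cast
    simp [hLdef, LinearMap.sum_apply, LinearMap.smul_apply, LinearMap.proj_apply,
      castR, mul_comm]
  set H : (Fin n → ℝ) →ₗ[ℝ] (Fin k → ℝ) := LinearMap.pi L with hHdef
  have hHapp : ∀ x j, H x j = L j x := fun x j => rfl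
  -- basic face facts
  have hFsubA : ∀ i, F i ⊆ A := by
    intro i
    have := (hF {i} (singleton_nonempty i)).1.1
    simpa only [Finset.inf'_singleton] using this
  have hF'le : ∀ i, F' ⊆ F i := by
    intro i
    exact Finset.inf'_le F (mem_univ i)
  have hgF' : ∀ x ∈ F', ∀ i, g i x = 0 := fun x hx i =>
    ((hg i x (hFsubA i (hF'le i hx))).2).mp (hF'le i hx)
  have hWker : W ≤ LinearMap.ker H := by
    rw [hW]
    apply Submodule.span_le.mpr
    rintro - ⟨f, hf, rfl⟩
    simp only [SetLike.mem_coe, LinearMap.mem_ker]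
    funext j
    rw [hHapp, hLcast]
    rw [hgF' f hf j]
    simp
  -- rank facts
  have hAn : rkQ A = n := rkQ_top A hZA
  have hrkF' : rkQ F' + k = n := by
    have := (hF univ (Finset.univ_nonempty_iff.mpr ⟨⟨0, hk⟩⟩)).2
    rwa [card_univ, Fintype.card_fin, hAn] at this
  -- existence of the special elements a i
  have hai : ∀ i : Fin k, ∃ b ∈ A, g i b ≠ 0 ∧ ∀ j, j ≠ i → g j b = 0 := by
    intro i
    by_cases hs : (univ.erase i).Nonempty
    · obtain ⟨hTface, hTrk⟩ := hF (univ.erase i) hs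
      rw [card_erase_of_mem (mem_univ i), card_univ, Fintype.card_fin, hAn] at hTrk
      have hTA : (univ.erase i).inf' hs F ⊆ A := hTface.1
      have hTF : ∀ j ∈ univ.erase i, (univ.erase i).inf' hs F ⊆ F j :=
        fun j hj => Finset.inf'_le F hj
      have hne : ¬ ((univ.erase i).inf' hs F ⊆ F i) := by
        intro hc
        have hF'T : F' = (univ.erase i).inf' hs F := by
          apply Finset.Subset.antisymm
          · exact Finset.le_inf' hs F fun j hj => hF'le j
          · refine Finset.le_inf' _ F fun j hj => ?_
            by_cases hji : j = i
            · subst hji; exact hc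
            · exact hTF j (Finset.mem_erase.mpr ⟨hji, mem_univ j⟩)
        rw [hF'T] at hrkF'
        omega
      obtain ⟨b, hbT, hbF⟩ := Finset.not_subset.mp hne
      refine ⟨b, hTA hbT, ?_, ?_⟩
      · intro h0; exact hbF (((hg i b (hTA hbT)).2).mpr h0)
      · intro j hj
        exact ((hg j b (hTA hbT)).2).mp
          (hTF j (Finset.mem_erase.mpr ⟨hj, mem_univ j⟩) hbT)
    · have hall : ∀ j : Fin k, j = i := by
        intro j; by_contra hj
        exact hs ⟨j, Finset.mem_erase.mpr ⟨hj, mem_univ j⟩⟩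
      obtain ⟨hFi_face, hFi_rk⟩ := hF {i} (singleton_nonempty i)
      rw [Finset.card_singleton] at hFi_rk
      simp only [Finset.inf'_singleton] at hFi_face hFi_rk
      have hne : ¬ (A ⊆ F i) := by
        intro hc
        have hFA : F i = A := Finset.Subset.antisymm hFi_face.1 hc
        rw [hFA] at hFi_rk; omega
      obtain ⟨b, hbA, hbF⟩ := Finset.not_subset.mp hne
      exact ⟨b, hbA, fun h0 => hbF (((hg i b hbA).2).mpr h0),
        fun j hj => absurd (hall j) hj⟩
  choose a haA hag using hai
  have hlam : ∀ i, 0 < g i (a i) :=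
    fun i => lt_of_le_of_ne (hg i (a i) (haA i)).1 (Ne.symm (hag i).1)
  have hlamR : ∀ i, (0:ℝ) < (g i (a i) : ℝ) := fun i => by exact_mod_cast hlam i
  have hHsingle : ∀ i j, H (castR (a i)) j = if j = i then (g i (a i) : ℝ) else 0 := by
    intro i j
    rw [hHapp, hLcast]
    by_cases hji : j = i
    · subst hji; simp
    · rw [(hag i).2 j hji]; simp [hji]
  -- surjectivity of H
  have hsurj : LinearMap.range H = ⊤ := by
    rw [LinearMap.range_eq_top]
    intro x
    refine ⟨∑ i, (x i / (g i (a i) : ℝ)) • castR (a i), ?_⟩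
    funext j
    rw [map_sum]
    rw [Finset.sum_apply]
    have : ∀ i, (H ((x i / (g i (a i) : ℝ)) • castR (a i))) j
        = (x i / (g i (a i) : ℝ)) * (if j = i then (g i (a i) : ℝ) else 0) := by
      intro i
      rw [_root_.map_smul]
      rw [Pi.smul_apply, hHsingle, smul_eq_mul]
    simp_rw [this, mul_ite, mul_zero]
    rw [Finset.sum_ite_eq univ j (fun i => x i / (g i (a i) : ℝ) * (g i (a i) : ℝ))]
    simp [div_mul_cancel₀ _ (ne_of_gt (hlamR j))]
  have hker : k + Module.finrank ℝ (LinearMap.ker H) = n := by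
    have h1 := LinearMap.finrank_range_add_finrank_ker H
    rw [hsurj, finrank_top, Module.finrank_fin_fun, Module.finrank_fin_fun] at h1
    exact h1
  have hWrk : n - k ≤ Module.finrank ℝ W := by
    have h2 := rkQ_le_finrank_real F'
    rw [← hW] at h2
    omega
  have hkerW : LinearMap.ker H = W := by
    refine (Submodule.eq_of_le_of_finrank_le hWker ?_).symm
    omega
  -- the generators
  set v : Fin k → ((Fin n → ℝ) ⧸ W) := fun i => W.mkQ (castR (a i)) with hvdef
  refine ⟨v, ?_, ?_⟩
  · -- linear independence
    set Hbar : ((Fin n → ℝ) ⧸ W) →ₗ[ℝ] (Fin k → ℝ) := W.liftQ H hWker with hHbar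
    apply LinearIndependent.of_comp Hbar
    have hcomp : ∀ i, (Hbar ∘ v) i = H (castR (a i)) := fun i => rfl
    rw [Fintype.linearIndependent_iff]
    intro c hc j
    have := congrFun hc j
    rw [Finset.sum_apply] at this
    simp only [Pi.smul_apply, hcomp, hHsingle, smul_eq_mul, mul_ite, mul_zero] at this
    rw [Finset.sum_ite_eq univ j (fun i => c i * (g i (a i) : ℝ))] at this
    simp only [mem_univ, if_true, Pi.zero_apply] at this
    exact (mul_eq_zero.mp this).resolve_right (ne_of_gt (hlamR j))
  · -- cone equality
    ext x
    constructor
    · rintro ⟨y, ⟨c, hc0, rfl⟩, rfl⟩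
      set y : Fin n → ℝ := ∑ b ∈ A, c b • castR b with hy
      have hLy : ∀ j, L j y = ∑ b ∈ A, c b * (g j b : ℝ) := by
        intro j
        rw [hy, map_sum]
        exact Finset.sum_congr rfl fun b _ => by rw [_root_.map_smul, hLcast, smul_eq_mul]
      have hLy0 : ∀ j, 0 ≤ L j y := by
        intro j
        rw [hLy]
        exact Finset.sum_nonneg fun b hb => mul_nonneg (hc0 b)
          (by exact_mod_cast (hg j b hb).1)
      set d : Fin k → ℝ := fun i => L i y / (g i (a i) : ℝ) with hd
      refine ⟨d, fun i => div_nonneg (hLy0 i) (le_of_lt (hlamR i)), ?_⟩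
      have hstep : ∑ i, d i • v i = W.mkQ (∑ i, d i • castR (a i)) := by
        rw [map_sum]
        exact Finset.sum_congr rfl fun i _ => by
          rw [_root_.map_smul]
      have hterm : ∀ j, H (∑ i, d i • castR (a i)) j = d j * (g j (a j) : ℝ) := by
        intro j
        rw [map_sum, Finset.sum_apply]
        simp only [_root_.map_smul, Pi.smul_apply, hHsingle, smul_eq_mul, mul_ite, mul_zero]
        rw [Finset.sum_ite_eq univ j (fun i => d i * (g i (a i) : ℝ))]
        simp
      rw [hstep, Submodule.mkQ_apply, Submodule.mkQ_apply, Submodule.Quotient.eq]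
      rw [← hkerW, LinearMap.mem_ker]
      funext j
      rw [_root_.map_sub, Pi.sub_apply, hterm j, Pi.zero_apply, hHapp]
      simp only [hd]
      rw [div_mul_cancel₀ _ (ne_of_gt (hlamR j))]
      ring
    · rintro ⟨c, hc0, rfl⟩
      refine ⟨∑ i, c i • castR (a i), ?_, ?_⟩
      · refine ⟨fun b => ∑ i ∈ univ.filter (fun i => a i = b), c i,
          fun b => Finset.sum_nonneg fun i _ => hc0 i, ?_⟩
        rw [← Finset.sum_fiberwise_of_maps_to (fun i _ => haA i)
          (fun i => c i • castR (a i))]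
        refine Finset.sum_congr rfl fun b _ => ?_
        rw [Finset.sum_smul]
        exact Finset.sum_congr rfl fun i hi => by
          rw [(Finset.mem_filter.mp hi).2]
      · rw [map_sum]
        exact Finset.sum_congr rfl fun i _ => by
          rw [_root_.map_smul]
end
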